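/- arXiv:1611.00989 — 5 statements merged into one kernel-verified Lean document; each statement's English description precedes it below -/
import Mathlib

section
/- Let n ≥ 2, let ρ : ℝⁿ → ℝ be of class C³ and let k : ℝ → ℝ be of class C². Then at every point of ℝⁿ the divergence of the general Korteweg capillary tensor satisfies the identity ∇( ρ k(ρ) Δρ + (1/2)(k(ρ) + ρ k'(ρ)) |∇ρ|² ) − div( k(ρ) ∇ρ ⊗ ∇ρ ) = ρ ∇( k(ρ) Δρ + (1/2) k'(ρ) |∇ρ|² ). -/
open scoped BigOperators
open MeasureTheory

/-- Partial derivative `∂ᵢ f` of a scalar function at a point `x`. -/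
noncomputable def pd {n : ℕ} (i : Fin n) (f : (Fin n → ℝ) → ℝ) (x : Fin n → ℝ) : ℝ :=
  fderiv ℝ f x (Pi.single i 1)

/-- Gradient of a scalar function. -/
noncomputable def grad {n : ℕ} (f : (Fin n → ℝ) → ℝ) (x : Fin n → ℝ) : Fin n → ℝ :=
  fun i => pd i f x

/-- Laplacian of a scalar function. -/
noncomputable def lap {n : ℕ} (f : (Fin n → ℝ) → ℝ) (x : Fin n → ℝ) : ℝ :=
  ∑ i, pd i (pd i f) x

/-- Squared euclidean norm of the gradient, `|∇f|² = ∑ᵢ (∂ᵢf)²`. -/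
noncomputable def gradNormSq {n : ℕ} (f : (Fin n → ℝ) → ℝ) (x : Fin n → ℝ) : ℝ :=
  ∑ i, (pd i f x) ^ 2

/-- Divergence of a matrix-valued field: `(matDiv M x)ᵢ = ∑ⱼ ∂ⱼ Mⱼᵢ`. -/
noncomputable def matDiv {n : ℕ} (M : (Fin n → ℝ) → Matrix (Fin n) (Fin n) ℝ)
    (x : Fin n → ℝ) : Fin n → ℝ :=
  fun i => ∑ j, pd j (fun y => M y j i) x

/-- Divergence of a vector field: `vecDiv F x = ∑ᵢ ∂ᵢ Fᵢ`. -/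
noncomputable def vecDiv {n : ℕ} (F : (Fin n → ℝ) → (Fin n → ℝ)) (x : Fin n → ℝ) : ℝ :=
  ∑ i, pd i (fun y => F y i) x

/-- Jacobian matrix of a vector field: `(jacM F x)ᵢⱼ = ∂ⱼ Fᵢ`. -/
noncomputable def jacM {n : ℕ} (F : (Fin n → ℝ) → (Fin n → ℝ)) (x : Fin n → ℝ) :
    Matrix (Fin n) (Fin n) ℝ :=
  Matrix.of fun i j => pd j (fun y => F y i) x

section Helpers

variable {n : ℕ} {f g : (Fin n → ℝ) → ℝ} {x : Fin n → ℝ}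

lemma pd_add (i : Fin n) (hf : DifferentiableAt ℝ f x) (hg : DifferentiableAt ℝ g x) :
    pd i (fun y => f y + g y) x = pd i f x + pd i g x := by
  unfold pd; rw [fderiv_fun_add hf hg]; simp

lemma pd_mul (i : Fin n) (hf : DifferentiableAt ℝ f x) (hg : DifferentiableAt ℝ g x) :
    pd i (fun y => f y * g y) x = pd i f x * g x + f x * pd i g x := by
  unfold pd; rw [fderiv_fun_mul hf hg]; simp; ring

lemma pd_const_mul (i : Fin n) (c : ℝ) (hf : DifferentiableAt ℝ f x) :
    pd i (fun y => c * f y) x = c * pd i f x := by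
  unfold pd; rw [fderiv_const_mul hf]; simp

lemma pd_sum {ι : Type*} (s : Finset ι) (F : ι → (Fin n → ℝ) → ℝ) (i : Fin n)
    (hF : ∀ j ∈ s, DifferentiableAt ℝ (F j) x) :
    pd i (fun y => ∑ j ∈ s, F j y) x = ∑ j ∈ s, pd i (F j) x := by
  unfold pd; rw [fderiv_fun_sum hF]; simp

lemma pd_comp {k : ℝ → ℝ} (i : Fin n) (hk : DifferentiableAt ℝ k (f x))
    (hf : DifferentiableAt ℝ f x) :
    pd i (fun y => k (f y)) x = deriv k (f x) * pd i f x := by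
  have h : HasFDerivAt (fun y => k (f y)) (deriv k (f x) • fderiv ℝ f x) x :=
    hk.hasDerivAt.comp_hasFDerivAt x hf.hasFDerivAt
  unfold pd; rw [h.fderiv]; simp

lemma contDiff_pd {N m : WithTop ℕ∞} (hf : ContDiff ℝ N f) (h : m + 1 ≤ N) (i : Fin n) :
    ContDiff ℝ m (pd i f) := by
  have := ((ContinuousLinearMap.apply ℝ ℝ (Pi.single i 1)).contDiff).comp (hf.fderiv_right h)
  exact this

lemma pd_pd (hf : ContDiff ℝ 3 f) (i j : Fin n) :
    pd j (pd i f) x = fderiv ℝ (fderiv ℝ f) x (Pi.single j 1) (Pi.single i 1) := by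
  have hdf : DifferentiableAt ℝ (fderiv ℝ f) x :=
    ((hf.fderiv_right (m := 2) (by norm_num)).differentiable (by norm_num)) x
  have h' := ((ContinuousLinearMap.apply ℝ ℝ ((Pi.single i 1) : Fin n → ℝ)).hasFDerivAt
      (x := fderiv ℝ f x)).comp x hdf.hasFDerivAt
  have h : HasFDerivAt (fun y => fderiv ℝ f y (Pi.single i 1))
      ((ContinuousLinearMap.apply ℝ ℝ (Pi.single i 1)).comp (fderiv ℝ (fderiv ℝ f) x)) x := h'
  unfold pd; rw [h.fderiv]; simp

lemma pd_symm (hf : ContDiff ℝ 3 f) (i j : Fin n) :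
    pd j (pd i f) x = pd i (pd j f) x := by
  rw [pd_pd hf, pd_pd hf]
  exact (hf.contDiffAt.isSymmSndFDerivAt (by norm_num)) _ _

end Helpers

theorem korteweg_tensor_divergence {n : ℕ} (hn : 2 ≤ n)
    (ρ : (Fin n → ℝ) → ℝ) (k : ℝ → ℝ)
    (hρ : ContDiff ℝ 3 ρ) (hk : ContDiff ℝ 2 k)
    (x : Fin n → ℝ) (i : Fin n) :
    grad (fun y => ρ y * k (ρ y) * lap ρ y
        + (1 / 2) * (k (ρ y) + ρ y * deriv k (ρ y)) * gradNormSq ρ y) x i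
      - matDiv (fun y => Matrix.of fun j i' => k (ρ y) * pd j ρ y * pd i' ρ y) x i
    = ρ x * grad (fun y => k (ρ y) * lap ρ y
        + (1 / 2) * deriv k (ρ y) * gradNormSq ρ y) x i := by
  classical
  -- basic smoothness
  have hρ1 : ContDiff ℝ 1 ρ := hρ.of_le (by norm_num)
  have hdρ : DifferentiableAt ℝ ρ x := (hρ1.differentiable (by norm_num)) x
  have hK : ContDiff ℝ 1 (fun y => k (ρ y)) := (hk.of_le (by norm_num)).comp hρ1
  have hdK : DifferentiableAt ℝ (fun y => k (ρ y)) x := hK.differentiable (by norm_num) x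
  have hdk : DifferentiableAt ℝ k (ρ x) := (hk.differentiable (by norm_num)) (ρ x)
  have hk2 : ContDiff ℝ (1 + 1) k := hk.of_le (by norm_num)
  have hk' : ContDiff ℝ 1 (deriv k) := (contDiff_succ_iff_deriv.mp hk2).2.2
  have hdk' : DifferentiableAt ℝ (deriv k) (ρ x) := hk'.differentiable (by norm_num) (ρ x)
  have hK' : ContDiff ℝ 1 (fun y => deriv k (ρ y)) := hk'.comp hρ1
  have hdK' : DifferentiableAt ℝ (fun y => deriv k (ρ y)) x := hK'.differentiable (by norm_num) x
  have hp2 : ∀ j : Fin n, ContDiff ℝ 2 (pd j ρ) := fun j => contDiff_pd hρ (by norm_num) j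
  have hdp : ∀ j : Fin n, DifferentiableAt ℝ (pd j ρ) x :=
    fun j => ((hp2 j).differentiable (by norm_num)) x
  have hdpp : ∀ j l : Fin n, DifferentiableAt ℝ (pd l (pd j ρ)) x :=
    fun j l => ((contDiff_pd (m := 1) (hp2 j) (by norm_num) l).differentiable (by norm_num)) x
  have hdlap : DifferentiableAt ℝ (lap ρ) x := by
    have hl : lap ρ = fun y => ∑ j, pd j (pd j ρ) y := rfl
    rw [hl]; exact DifferentiableAt.fun_sum fun j _ => hdpp j j
  have hdS : DifferentiableAt ℝ (gradNormSq ρ) x := by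
    have hs : gradNormSq ρ = fun y => ∑ j, pd j ρ y ^ 2 := rfl
    rw [hs]; exact DifferentiableAt.fun_sum fun j _ => (hdp j).pow 2
  -- differentiability of composite products
  have hd1 : DifferentiableAt ℝ (fun y => ρ y * k (ρ y)) x := hdρ.mul hdK
  have hd2 : DifferentiableAt ℝ (fun y => ρ y * k (ρ y) * lap ρ y) x := hd1.mul hdlap
  have hd3 : DifferentiableAt ℝ (fun y => k (ρ y) + ρ y * deriv k (ρ y)) x :=
    hdK.add (hdρ.mul hdK')
  have hd3' : DifferentiableAt ℝ (fun y => 1 / 2 * (k (ρ y) + ρ y * deriv k (ρ y))) x :=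
    (differentiableAt_const _).mul hd3
  have hd4 : DifferentiableAt ℝ
      (fun y => 1 / 2 * (k (ρ y) + ρ y * deriv k (ρ y)) * gradNormSq ρ y) x := hd3'.mul hdS
  have hd6a : DifferentiableAt ℝ (fun y => 1 / 2 * deriv k (ρ y)) x :=
    (differentiableAt_const _).mul hdK'
  have hd6 : DifferentiableAt ℝ (fun y => 1 / 2 * deriv k (ρ y) * gradNormSq ρ y) x :=
    hd6a.mul hdS
  -- expansions
  have EL : pd i (fun y => ρ y * k (ρ y) * lap ρ y
      + 1 / 2 * (k (ρ y) + ρ y * deriv k (ρ y)) * gradNormSq ρ y) x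
      = pd i (fun y => ρ y * k (ρ y) * lap ρ y) x
        + pd i (fun y => 1 / 2 * (k (ρ y) + ρ y * deriv k (ρ y)) * gradNormSq ρ y) x :=
    pd_add i hd2 hd4
  have E2 : pd i (fun y => ρ y * k (ρ y) * lap ρ y) x
      = pd i (fun y => ρ y * k (ρ y)) x * lap ρ x + ρ x * k (ρ x) * pd i (lap ρ) x :=
    pd_mul i hd1 hdlap
  have E1 : pd i (fun y => ρ y * k (ρ y)) x
      = pd i ρ x * k (ρ x) + ρ x * pd i (fun y => k (ρ y)) x := pd_mul i hdρ hdK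
  have EK : pd i (fun y => k (ρ y)) x = deriv k (ρ x) * pd i ρ x := pd_comp i hdk hdρ
  have E4 : pd i (fun y => 1 / 2 * (k (ρ y) + ρ y * deriv k (ρ y)) * gradNormSq ρ y) x
      = pd i (fun y => 1 / 2 * (k (ρ y) + ρ y * deriv k (ρ y))) x * gradNormSq ρ x
        + 1 / 2 * (k (ρ x) + ρ x * deriv k (ρ x)) * pd i (gradNormSq ρ) x :=
    pd_mul i hd3' hdS
  have E5 : pd i (fun y => 1 / 2 * (k (ρ y) + ρ y * deriv k (ρ y))) x
      = 1 / 2 * pd i (fun y => k (ρ y) + ρ y * deriv k (ρ y)) x := pd_const_mul i _ hd3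
  have E6 : pd i (fun y => k (ρ y) + ρ y * deriv k (ρ y)) x
      = pd i (fun y => k (ρ y)) x + pd i (fun y => ρ y * deriv k (ρ y)) x :=
    pd_add i hdK (hdρ.mul hdK')
  have E7 : pd i (fun y => ρ y * deriv k (ρ y)) x
      = pd i ρ x * deriv k (ρ x) + ρ x * pd i (fun y => deriv k (ρ y)) x := pd_mul i hdρ hdK'
  have EK' : pd i (fun y => deriv k (ρ y)) x = deriv (deriv k) (ρ x) * pd i ρ x :=
    pd_comp i hdk' hdρ
  have ER : pd i (fun y => k (ρ y) * lap ρ y + 1 / 2 * deriv k (ρ y) * gradNormSq ρ y) x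
      = pd i (fun y => k (ρ y) * lap ρ y) x
        + pd i (fun y => 1 / 2 * deriv k (ρ y) * gradNormSq ρ y) x :=
    pd_add i (hdK.mul hdlap) hd6
  have E8 : pd i (fun y => k (ρ y) * lap ρ y) x
      = pd i (fun y => k (ρ y)) x * lap ρ x + k (ρ x) * pd i (lap ρ) x := pd_mul i hdK hdlap
  have E9 : pd i (fun y => 1 / 2 * deriv k (ρ y) * gradNormSq ρ y) x
      = pd i (fun y => 1 / 2 * deriv k (ρ y)) x * gradNormSq ρ x
        + 1 / 2 * deriv k (ρ x) * pd i (gradNormSq ρ) x := pd_mul i hd6a hdS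
  have E10 : pd i (fun y => 1 / 2 * deriv k (ρ y)) x
      = 1 / 2 * pd i (fun y => deriv k (ρ y)) x := pd_const_mul i _ hdK'
  -- gradient of |∇ρ|²
  have hGs : pd i (gradNormSq ρ) x = 2 * ∑ j, pd j ρ x * pd j (pd i ρ) x := by
    have h0 : gradNormSq ρ = fun y => ∑ j, pd j ρ y * pd j ρ y := by
      funext y; simp [gradNormSq, pow_two]
    have hsum : pd i (fun y => ∑ j, pd j ρ y * pd j ρ y) x
        = ∑ j, pd i (fun y => pd j ρ y * pd j ρ y) x :=
      pd_sum Finset.univ (fun j => fun y => pd j ρ y * pd j ρ y) i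
        (fun j _ => (hdp j).mul (hdp j))
    rw [h0, hsum, Finset.mul_sum]
    refine Finset.sum_congr rfl fun j _ => ?_
    rw [pd_mul i (hdp j) (hdp j), pd_symm hρ j i]
    ring
  -- the matrix divergence term
  have hmatsum : (∑ j, pd j (fun y => k (ρ y) * pd j ρ y * pd i ρ y) x)
      = deriv k (ρ x) * pd i ρ x * gradNormSq ρ x + k (ρ x) * pd i ρ x * lap ρ x
        + k (ρ x) * ∑ j, pd j ρ x * pd j (pd i ρ) x := by
    have step : ∀ j : Fin n, pd j (fun y => k (ρ y) * pd j ρ y * pd i ρ y) x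
        = deriv k (ρ x) * pd i ρ x * pd j ρ x ^ 2
          + k (ρ x) * pd i ρ x * pd j (pd j ρ) x
          + k (ρ x) * (pd j ρ x * pd j (pd i ρ) x) := by
      intro j
      have M1 : pd j (fun y => k (ρ y) * pd j ρ y * pd i ρ y) x
          = pd j (fun y => k (ρ y) * pd j ρ y) x * pd i ρ x
            + k (ρ x) * pd j ρ x * pd j (pd i ρ) x := pd_mul j (hdK.mul (hdp j)) (hdp i)
      have M2 : pd j (fun y => k (ρ y) * pd j ρ y) x
          = pd j (fun y => k (ρ y)) x * pd j ρ x + k (ρ x) * pd j (pd j ρ) x :=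
        pd_mul j hdK (hdp j)
      have M3 : pd j (fun y => k (ρ y)) x = deriv k (ρ x) * pd j ρ x := pd_comp j hdk hdρ
      rw [M1, M2, M3]; ring
    calc (∑ j, pd j (fun y => k (ρ y) * pd j ρ y * pd i ρ y) x)
        = ∑ j, (deriv k (ρ x) * pd i ρ x * pd j ρ x ^ 2
            + k (ρ x) * pd i ρ x * pd j (pd j ρ) x
            + k (ρ x) * (pd j ρ x * pd j (pd i ρ) x)) :=
          Finset.sum_congr rfl fun j _ => step j
      _ = deriv k (ρ x) * pd i ρ x * gradNormSq ρ x + k (ρ x) * pd i ρ x * lap ρ x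
            + k (ρ x) * ∑ j, pd j ρ x * pd j (pd i ρ) x := by
          rw [Finset.sum_add_distrib, Finset.sum_add_distrib,
            ← Finset.mul_sum, ← Finset.mul_sum, ← Finset.mul_sum]
          rfl
  simp only [grad, matDiv, Matrix.of_apply]
  rw [EL, E2, E1, E4, E5, E6, E7, ER, E8, E9, E10, EK, EK', hGs, hmatsum]
  ring
end

section
/- (Liouville formula for the Jacobian of a flow.) Let n ≥ 2, T > 0, and let u : [0,T] × ℝⁿ → ℝⁿ be continuous and continuously differentiable with respect to x, with spatial Jacobian Dₓu continuous on [0,T] × ℝⁿ. Let X : [0,T] × ℝⁿ → ℝⁿ be a flow of u which is C¹ in x, such that (t,x) ↦ DₓX(t,x) is continuous and for each x the map t ↦ DₓX(t,x) is differentiable with ∂ₜDₓX(t,x) = Dₓu(t, X(t,x)) · DₓX(t,x). Then for all (t,x) ∈ [0,T] × ℝⁿ, det DₓX(t,x) = exp( ∫₀ᵗ (div u)(τ, X(τ,x)) dτ ). -/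
open scoped BigOperators
open MeasureTheory

noncomputable def detCM (n : ℕ) : ContinuousMultilinearMap ℝ (fun _ : Fin n => (Fin n → ℝ)) ℝ :=
  MultilinearMap.mkContinuous
    ((Matrix.detRowAlternating : (Fin n → ℝ) [⋀^Fin n]→ₗ[ℝ] ℝ) :
      MultilinearMap ℝ (fun _ : Fin n => (Fin n → ℝ)) ℝ)
    (Nat.factorial n) (by
      intro m
      show ‖(Matrix.of m).det‖ ≤ _
      rw [Matrix.det_apply]
      refine (norm_sum_le _ _).trans ?_
      have h1 : ∀ σ : Equiv.Perm (Fin n),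
          ‖Equiv.Perm.sign σ • ∏ i, Matrix.of m (σ i) i‖ ≤ ∏ i, ‖m i‖ := by
        intro σ
        have : ‖Equiv.Perm.sign σ • ∏ i, Matrix.of m (σ i) i‖ = ‖∏ i, m (σ i) i‖ := by
          rcases Int.units_eq_one_or (Equiv.Perm.sign σ) with h | h <;>
            simp [h, Units.smul_def, Matrix.of_apply]
        rw [this, norm_prod]
        have h2 : ∏ i, ‖m (σ i) i‖ ≤ ∏ i, ‖m (σ i)‖ :=
          Finset.prod_le_prod (fun i _ => norm_nonneg _)
            (fun i _ => norm_le_pi_norm (m (σ i)) i)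
        refine h2.trans ?_
        rw [Equiv.prod_comp σ (fun i => ‖m i‖)]
      refine (Finset.sum_le_sum fun σ _ => h1 σ).trans ?_
      rw [Finset.sum_const, Finset.card_univ, Fintype.card_perm, Fintype.card_fin,
        nsmul_eq_mul])
      

lemma detCM_apply {n : ℕ} (m : Fin n → (Fin n → ℝ)) : detCM n m = (Matrix.of m).det := rfl

lemma jacobi_step {n : ℕ} {M : ℝ → Matrix (Fin n) (Fin n) ℝ} {A : Matrix (Fin n) (Fin n) ℝ}
    {s : Set ℝ} {t : ℝ}
    (h : ∀ i j, HasDerivWithinAt (fun s' => M s' i j) ((A * M t) i j) s t) :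
    HasDerivWithinAt (fun s' => (M s').det) (Matrix.trace A * (M t).det) s t := by
  have hrow : ∀ i, HasFDerivWithinAt (fun s' => M s' i)
      ((1 : ℝ →L[ℝ] ℝ).smulRight ((A * M t) i)) s t := fun i =>
    (hasDerivWithinAt_pi.2 fun j => h i j).hasFDerivWithinAt
  have hd := HasFDerivWithinAt.multilinear_comp (detCM n) hrow
  have hd' := hd.hasDerivWithinAt
  have key : (∑ i : Fin n, ((detCM n).toContinuousLinearMap (fun j => M t j) i) ∘L
      ((1 : ℝ →L[ℝ] ℝ).smulRight ((A * M t) i))) 1 = Matrix.trace A * (M t).det := by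
    rw [ContinuousLinearMap.sum_apply]
    have h1 : ∀ i : Fin n, (((detCM n).toContinuousLinearMap (fun j => M t j) i) ∘L
        ((1 : ℝ →L[ℝ] ℝ).smulRight ((A * M t) i))) 1
        = ((M t).updateRow i ((A * M t) i)).det := by
      intro i
      simp only [ContinuousLinearMap.comp_apply, ContinuousLinearMap.smulRight_apply,
        ContinuousLinearMap.one_apply, one_smul,
        ContinuousMultilinearMap.toContinuousLinearMap_apply]
      rfl
    rw [Finset.sum_congr rfl fun i _ => h1 i]
    have h2 : ∀ i : Fin n, ((M t).updateRow i ((A * M t) i)).det = A i i * (M t).det := by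
      intro i
      have hrow : (A * M t) i = ∑ k, A i k • M t k := by
        funext j
        simp [Matrix.mul_apply, Finset.sum_apply]
      rw [hrow, Matrix.det_updateRow_sum]
      simp [smul_eq_mul]
    rw [Finset.sum_congr rfl fun i _ => h2 i, Matrix.trace]
    simp [Matrix.diag, Finset.sum_mul]
  rw [← key]
  exact hd'
/-- Liouville formula for the Jacobian of a flow:
if `X` is a flow of `u` whose spatial Jacobian solves the linearized equation
`∂ₜDₓX = Dₓu(t,X)·DₓX`, then `det DₓX(t,x) = exp(∫₀ᵗ (div u)(τ, X(τ,x)) dτ)`. -/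
theorem liouville_jacobian_formula {n : ℕ} (hn : 2 ≤ n) (T : ℝ) (hT : 0 < T)
    (u X : ℝ → (Fin n → ℝ) → (Fin n → ℝ))
    (hu_cont : ContinuousOn (fun p : ℝ × (Fin n → ℝ) => u p.1 p.2)
      (Set.Icc 0 T ×ˢ Set.univ))
    (hu_diff : ∀ t ∈ Set.Icc (0 : ℝ) T, Differentiable ℝ (u t))
    (hDu_cont : ∀ i j : Fin n, ContinuousOn
      (fun p : ℝ × (Fin n → ℝ) => jacM (u p.1) p.2 i j) (Set.Icc 0 T ×ˢ Set.univ))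
    (hX0 : ∀ x, X 0 x = x)
    (hXflow : ∀ t ∈ Set.Icc (0 : ℝ) T, ∀ x,
      HasDerivWithinAt (fun s => X s x) (u t (X t x)) (Set.Icc 0 T) t)
    (hX_diff : ∀ t ∈ Set.Icc (0 : ℝ) T, Differentiable ℝ (X t))
    (hDX_cont : ∀ i j : Fin n, ContinuousOn
      (fun p : ℝ × (Fin n → ℝ) => jacM (X p.1) p.2 i j) (Set.Icc 0 T ×ˢ Set.univ))
    (hDX_deriv : ∀ x, ∀ t ∈ Set.Icc (0 : ℝ) T, ∀ i j : Fin n,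
      HasDerivWithinAt (fun s => jacM (X s) x i j)
        ((jacM (u t) (X t x) * jacM (X t) x) i j) (Set.Icc 0 T) t)
    (t : ℝ) (ht : t ∈ Set.Icc (0 : ℝ) T) (x : Fin n → ℝ) :
    (jacM (X t) x).det = Real.exp (∫ τ in (0 : ℝ)..t, vecDiv (u τ) (X τ x)) := by
  classical
  have hXc : ContinuousOn (fun s => X s x) (Set.Icc 0 T) :=
    fun s hs => (hXflow s hs x).continuousWithinAt
  have hmap : Set.MapsTo (fun s : ℝ => (s, X s x)) (Set.Icc 0 T) (Set.Icc 0 T ×ˢ Set.univ) :=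
    fun s hs => ⟨hs, trivial⟩
  have hpair : ContinuousOn (fun s : ℝ => (s, X s x)) (Set.Icc 0 T) :=
    continuousOn_id.prodMk hXc
  -- continuity of the divergence along the flow
  have hφc : ContinuousOn (fun s => vecDiv (u s) (X s x)) (Set.Icc 0 T) := by
    have h1 : ∀ i : Fin n, ContinuousOn (fun s => jacM (u s) (X s x) i i) (Set.Icc 0 T) := by
      intro i
      simpa [Function.comp_def] using (hDu_cont i i).comp hpair hmap
    have h2 := continuousOn_finset_sum (Finset.univ : Finset (Fin n)) (fun i _ => h1 i)
    exact h2.congr (fun s _ => by simp [vecDiv, jacM])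
  -- continuity of the Jacobian determinant along the flow
  have hFc : ContinuousOn (fun s => (jacM (X s) x).det) (Set.Icc 0 T) := by
    have hM' : ContinuousOn (fun s => jacM (X s) x) (Set.Icc 0 T) :=
      continuousOn_pi.2 fun i => continuousOn_pi.2 fun j => by
        have hpair2 : ContinuousOn (fun s : ℝ => (s, x)) (Set.Icc 0 T) :=
          continuousOn_id.prodMk continuousOn_const
        have hmap2 : Set.MapsTo (fun s : ℝ => (s, x)) (Set.Icc 0 T)
            (Set.Icc 0 T ×ˢ Set.univ) := fun s hs => ⟨hs, trivial⟩
        simpa [Function.comp_def] using (hDX_cont i j).comp hpair2 hmap2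
    exact (continuous_id.matrix_det).comp_continuousOn hM'
  -- integrability
  have hφint : ∀ s ∈ Set.Icc (0:ℝ) T, IntervalIntegrable (fun τ => vecDiv (u τ) (X τ x)) volume 0 s := by
    intro s hs
    exact (hφc.mono (by rw [Set.uIcc_of_le hs.1]; exact Set.Icc_subset_Icc le_rfl hs.2)).intervalIntegrable
  -- continuity of the primitive
  have hIc : ContinuousOn (fun s => ∫ τ in (0:ℝ)..s, vecDiv (u τ) (X τ x)) (Set.Icc 0 T) := by
    have := intervalIntegral.continuousOn_primitive_interval'
      (hφint T ⟨le_of_lt hT, le_rfl⟩) (Set.left_mem_uIcc)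
    rwa [Set.uIcc_of_le hT.le] at this
  -- derivative of the primitive from the right
  have hIder : ∀ s ∈ Set.Ico (0:ℝ) T,
      HasDerivWithinAt (fun s' => ∫ τ in (0:ℝ)..s', vecDiv (u τ) (X τ x))
        (vecDiv (u s) (X s x)) (Set.Ici s) s := by
    intro s hs
    have hmemIoi : Set.Icc 0 T ∈ nhdsWithin s (Set.Ioi s) :=
      Filter.mem_of_superset (Ioc_mem_nhdsGT_of_mem ⟨le_rfl, hs.2⟩)
        (Set.Ioc_subset_Icc_self.trans (Set.Icc_subset_Icc hs.1 le_rfl))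
    have hmeas : StronglyMeasurableAtFilter (fun τ => vecDiv (u τ) (X τ x))
        (nhdsWithin s (Set.Ioi s)) volume :=
      ⟨Set.Icc 0 T, hmemIoi, hφc.aestronglyMeasurable measurableSet_Icc⟩
    have hcw : ContinuousWithinAt (fun τ => vecDiv (u τ) (X τ x)) (Set.Ioi s) s :=
      (hφc s ⟨hs.1, hs.2.le⟩).mono_of_mem_nhdsWithin hmemIoi
    exact intervalIntegral.integral_hasDerivWithinAt_right (hφint s ⟨hs.1, hs.2.le⟩) hmeas hcw
  -- derivative of the Jacobian determinant (Jacobi/Liouville)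
  have hFder : ∀ s ∈ Set.Icc (0:ℝ) T,
      HasDerivWithinAt (fun s' => (jacM (X s') x).det)
        (vecDiv (u s) (X s x) * (jacM (X s) x).det) (Set.Icc 0 T) s := by
    intro s hs
    have h := jacobi_step (M := fun s' => jacM (X s') x) (A := jacM (u s) (X s x))
      (s := Set.Icc 0 T) (t := s) (fun i j => hDX_deriv x s hs i j)
    have htr : Matrix.trace (jacM (u s) (X s x)) = vecDiv (u s) (X s x) := by
      simp [Matrix.trace, Matrix.diag, vecDiv, jacM]
    rwa [htr] at h
  -- the product H is constant
  have hHc : ContinuousOn (fun s => (jacM (X s) x).det *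
      Real.exp (-(∫ τ in (0:ℝ)..s, vecDiv (u τ) (X τ x)))) (Set.Icc 0 T) :=
    hFc.mul (Real.continuous_exp.comp_continuousOn hIc.neg)
  have hHder : ∀ s ∈ Set.Ico (0:ℝ) T,
      HasDerivWithinAt (fun s' => (jacM (X s') x).det *
        Real.exp (-(∫ τ in (0:ℝ)..s', vecDiv (u τ) (X τ x)))) 0 (Set.Ici s) s := by
    intro s hs
    have hs' : s ∈ Set.Icc (0:ℝ) T := ⟨hs.1, hs.2.le⟩
    have hmem : Set.Icc (0:ℝ) T ∈ nhdsWithin s (Set.Ici s) := Icc_mem_nhdsGE_of_mem hs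
    have h1 : HasDerivWithinAt (fun s' => (jacM (X s') x).det)
        (vecDiv (u s) (X s x) * (jacM (X s) x).det) (Set.Ici s) s :=
      (hFder s hs').mono_of_mem_nhdsWithin hmem
    have h2 : HasDerivWithinAt
        (fun s' => Real.exp (-(∫ τ in (0:ℝ)..s', vecDiv (u τ) (X τ x))))
        (Real.exp (-(∫ τ in (0:ℝ)..s, vecDiv (u τ) (X τ x))) * (-(vecDiv (u s) (X s x))))
        (Set.Ici s) s := ((hIder s hs).neg).exp
    have h3 := h1.fun_mul h2
    refine h3.congr_deriv ?_
    ring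
  have hconst := constant_of_has_deriv_right_zero hHc hHder t ht
  -- value at time 0
  have hM0 : jacM (X 0) x = 1 := by
    ext i j
    have he : (fun y : Fin n → ℝ => X 0 y i) = fun y => y i := by
      funext y; rw [hX0]
    show pd j (fun y => X 0 y i) x = (1 : Matrix (Fin n) (Fin n) ℝ) i j
    have hfd : HasFDerivAt (fun y : Fin n → ℝ => y i)
        (ContinuousLinearMap.proj i : (Fin n → ℝ) →L[ℝ] ℝ) x :=
      (ContinuousLinearMap.proj i : (Fin n → ℝ) →L[ℝ] ℝ).hasFDerivAt
    rw [pd, he, hfd.fderiv]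
    simp [Matrix.one_apply, Pi.single_apply, eq_comm]
  rw [intervalIntegral.integral_same, neg_zero, Real.exp_zero, hM0, Matrix.det_one, mul_one]
    at hconst
  rw [Real.exp_neg] at hconst
  have hne : Real.exp (∫ τ in (0:ℝ)..t, vecDiv (u τ) (X τ x)) ≠ 0 := Real.exp_ne_zero _
  field_simp at hconst
  exact hconst
end

section
/- (Piola identity.) Let n ≥ 1 and let X : ℝⁿ → ℝⁿ be of class C². Then each column of the adjugate of the Jacobian matrix of X is divergence-free: for every index i ∈ {1,…,n} and every x ∈ ℝⁿ, Σⱼ ∂ⱼ [ (adj(DX))ⱼᵢ (x) ] = 0. Equivalently, every row of the cofactor matrix of DX is a divergence-free vector field. -/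
open scoped BigOperators
open MeasureTheory

namespace PiolaAux

open Equiv Finset

variable {n : ℕ} (X : (Fin n → ℝ) → (Fin n → ℝ))

/-- The (k,l) entry of the Jacobian of `X`, as a function of the base point. -/
noncomputable def aEnt (k l : Fin n) : (Fin n → ℝ) → ℝ :=
  fun y => pd l (fun z => X z k) y

lemma comp_contDiff (hX : ContDiff ℝ 2 X) (k : Fin n) :
    ContDiff ℝ 2 (fun z => X z k) :=
  ((ContinuousLinearMap.proj k : ((Fin n → ℝ)) →L[ℝ] ℝ).contDiff).comp hX

lemma aEnt_contDiff (hX : ContDiff ℝ 2 X) (k l : Fin n) :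
    ContDiff ℝ 1 (aEnt X k l) := by
  have h1 : ContDiff ℝ 1 (fderiv ℝ (fun z => X z k)) :=
    (comp_contDiff X hX k).fderiv_right (by norm_num)
  exact h1.clm_apply contDiff_const

/-- Symmetry of second-order partial derivatives for the components of a C² map. -/
lemma aEnt_symm (hX : ContDiff ℝ 2 X) (k j l : Fin n) (x : Fin n → ℝ) :
    pd j (aEnt X k l) x = pd l (aEnt X k j) x := by
  have hk := comp_contDiff X hX k
  have hd : DifferentiableAt ℝ (fderiv ℝ (fun z => X z k)) x :=
    ((hk.fderiv_right (m := 1) (by norm_num)).differentiable one_ne_zero) x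
  have hsym : IsSymmSndFDerivAt ℝ (fun z => X z k) x :=
    hk.contDiffAt.isSymmSndFDerivAt (by norm_num)
  have key : ∀ u v : Fin n → ℝ,
      fderiv ℝ (fun y => fderiv ℝ (fun z => X z k) y u) x v
        = fderiv ℝ (fderiv ℝ (fun z => X z k)) x v u := by
    intro u v
    rw [fderiv_clm_apply hd (differentiableAt_const u)]
    simp
  show fderiv ℝ (fun y => fderiv ℝ (fun z => X z k) y (Pi.single l 1)) x (Pi.single j 1)
      = fderiv ℝ (fun y => fderiv ℝ (fun z => X z k) y (Pi.single j 1)) x (Pi.single l 1)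
  rw [key, key]
  exact hsym _ _

/-- Leibniz expansion of an adjugate entry of the Jacobian as a sum over permutations. -/
lemma adj_eq (i j : Fin n) (y : Fin n → ℝ) :
    (jacM X y).adjugate j i =
      ∑ σ ∈ univ.filter (fun σ : Perm (Fin n) => σ j = i),
        ((Perm.sign σ : ℤ) : ℝ) * ∏ k ∈ univ.erase j, aEnt X (σ k) k y := by
  rw [Matrix.adjugate_apply, Matrix.det_apply']
  rw [← Finset.sum_filter_of_ne (p := fun σ : Perm (Fin n) => σ j = i)]
  · refine Finset.sum_congr rfl ?_
    intro σ hσ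
    rw [Finset.mem_filter] at hσ
    obtain ⟨-, hσj⟩ := hσ
    congr 1
    rw [← Finset.mul_prod_erase (h := Finset.mem_univ j)]
    have h1 : ((jacM X y).updateRow i (Pi.single j 1)) (σ j) j = 1 := by
      rw [hσj, Matrix.updateRow_self, Pi.single_eq_same]
    rw [h1, one_mul]
    refine Finset.prod_congr rfl ?_
    intro k hk
    have hkj : k ≠ j := Finset.ne_of_mem_erase hk
    have : σ k ≠ i := by
      rw [← hσj]; exact fun h => hkj (σ.injective h)
    rw [Matrix.updateRow_ne this]
    rfl
  · intro σ _ hne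
    by_contra hσj
    apply hne
    have hji : σ.symm i ≠ j := by
      intro h; apply hσj; rw [← h]; simp
    have : ((jacM X y).updateRow i (Pi.single j 1)) (σ (σ.symm i)) (σ.symm i) = 0 := by
      rw [Equiv.apply_symm_apply, Matrix.updateRow_self, Pi.single_eq_of_ne hji]
    rw [Finset.prod_eq_zero (Finset.mem_univ (σ.symm i))
      (by rw [Equiv.apply_symm_apply] at this ⊢; exact this), mul_zero]

/-- Differentiating the Leibniz expansion term by term. -/
lemma row_deriv (hX : ContDiff ℝ 2 X) (i j : Fin n) (x : Fin n → ℝ) :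
    pd j (fun y => ∑ σ ∈ univ.filter (fun σ : Perm (Fin n) => σ j = i),
        ((Perm.sign σ : ℤ) : ℝ) * ∏ k ∈ univ.erase j, aEnt X (σ k) k y) x =
      ∑ σ ∈ univ.filter (fun σ : Perm (Fin n) => σ j = i),
        ((Perm.sign σ : ℤ) : ℝ) * ∑ l ∈ univ.erase j,
          (∏ k ∈ (univ.erase j).erase l, aEnt X (σ k) k x) * pd j (aEnt X (σ l) l) x := by
  have hda : ∀ k l : Fin n, HasFDerivAt (aEnt X k l) (fderiv ℝ (aEnt X k l) x) x :=
    fun k l => (((aEnt_contDiff X hX k l).differentiable one_ne_zero) x).hasFDerivAt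
  have H : HasFDerivAt
      (fun y => ∑ σ ∈ univ.filter (fun σ : Perm (Fin n) => σ j = i),
        ((Perm.sign σ : ℤ) : ℝ) * ∏ k ∈ univ.erase j, aEnt X (σ k) k y)
      (∑ σ ∈ univ.filter (fun σ : Perm (Fin n) => σ j = i),
        ((Perm.sign σ : ℤ) : ℝ) • (∑ l ∈ univ.erase j,
          (∏ k ∈ (univ.erase j).erase l, aEnt X (σ k) k x) • fderiv ℝ (aEnt X (σ l) l) x)) x := by
    refine HasFDerivAt.fun_sum ?_
    intro σ _
    exact (HasFDerivAt.finset_prod (fun l _ => hda (σ l) l)).const_mul _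
  show fderiv ℝ _ x (Pi.single j 1) = _
  rw [H.fderiv]
  simp only [ContinuousLinearMap.coe_sum', Finset.sum_apply, ContinuousLinearMap.coe_smul',
    Pi.smul_apply, smul_eq_mul]
  exact Finset.sum_congr rfl fun σ _ => by rw [Finset.mul_sum, Finset.mul_sum]; rfl

/-- The summand of the triple sum. -/
noncomputable def trm (x : Fin n → ℝ) (j l : Fin n) (σ : Perm (Fin n)) : ℝ :=
  ((Perm.sign σ : ℤ) : ℝ) *
    ((∏ k ∈ (univ.erase j).erase l, aEnt X (σ k) k x) * pd j (aEnt X (σ l) l) x)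

/-- The triple sum cancels by pairing `(j, l, σ)` with `(l, j, σ ∘ swap j l)`,
using the symmetry of second derivatives. -/
lemma triple_zero (hX : ContDiff ℝ 2 X) (i : Fin n) (x : Fin n → ℝ) :
    ∑ j, ∑ σ ∈ univ.filter (fun σ : Perm (Fin n) => σ j = i),
      ((Perm.sign σ : ℤ) : ℝ) * ∑ l ∈ univ.erase j,
        (∏ k ∈ (univ.erase j).erase l, aEnt X (σ k) k x) * pd j (aEnt X (σ l) l) x = 0 := by
  classical
  let s : Finset (Fin n × Fin n × Perm (Fin n)) :=
    univ.filter (fun p => p.2.1 ≠ p.1 ∧ p.2.2 p.1 = i)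
  have flatten : (∑ j, ∑ σ ∈ univ.filter (fun σ : Perm (Fin n) => σ j = i),
      ((Perm.sign σ : ℤ) : ℝ) * ∑ l ∈ univ.erase j,
        (∏ k ∈ (univ.erase j).erase l, aEnt X (σ k) k x) * pd j (aEnt X (σ l) l) x)
      = ∑ p ∈ s, trm X x p.1 p.2.1 p.2.2 := by
    have hR : ∑ p ∈ s, trm X x p.1 p.2.1 p.2.2
        = ∑ j, ∑ l, ∑ σ, if l ≠ j ∧ σ j = i then trm X x j l σ else 0 := by
      rw [Finset.sum_filter, Fintype.sum_prod_type]
      simp only [Fintype.sum_prod_type]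
    rw [hR]
    refine Finset.sum_congr rfl fun j _ => ?_
    rw [Finset.sum_congr rfl (fun σ _ => Finset.mul_sum _ _ _), Finset.sum_comm]
    rw [← Finset.filter_ne' univ j, Finset.sum_filter]
    refine Finset.sum_congr rfl fun l _ => ?_
    rw [Finset.sum_filter]
    by_cases h : l ≠ j
    · simp [h, trm, mul_assoc, Finset.filter_ne']
    · simp [h]
  rw [flatten]
  refine Finset.sum_involution
    (fun p _ => (p.2.1, p.1, p.2.2 * Equiv.swap p.1 p.2.1)) ?_ ?_ ?_ ?_
  · rintro ⟨j, l, σ⟩ hp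
    rw [Finset.mem_filter] at hp
    obtain ⟨-, hlj, hσj⟩ := hp
    have hjl : j ≠ l := fun h => hlj h.symm
    have hsign : ((Perm.sign (σ * Equiv.swap j l) : ℤ) : ℝ)
        = -((Perm.sign σ : ℤ) : ℝ) := by
      rw [Perm.sign_mul, Perm.sign_swap hjl]
      push_cast
      ring
    have hprod : (∏ k ∈ (univ.erase l).erase j, aEnt X ((σ * Equiv.swap j l) k) k x)
        = ∏ k ∈ (univ.erase j).erase l, aEnt X (σ k) k x := by
      rw [Finset.erase_right_comm]
      refine Finset.prod_congr rfl fun k hk => ?_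
      have hkl : k ≠ l := Finset.ne_of_mem_erase hk
      have hkj : k ≠ j := Finset.ne_of_mem_erase (Finset.mem_of_mem_erase hk)
      rw [Perm.mul_apply, Equiv.swap_apply_of_ne_of_ne hkj hkl]
    have hD : pd l (aEnt X ((σ * Equiv.swap j l) j) j) x
        = pd j (aEnt X (σ l) l) x := by
      rw [Perm.mul_apply, Equiv.swap_apply_left]
      exact aEnt_symm X hX (σ l) l j x
    simp only [trm, hsign, hprod, hD]
    ring
  · rintro ⟨j, l, σ⟩ hp -
    rw [Finset.mem_filter] at hp
    intro h
    exact hp.2.1 (congrArg Prod.fst h)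
  · rintro ⟨j, l, σ⟩ hp
    rw [Finset.mem_filter] at hp
    obtain ⟨-, hlj, hσj⟩ := hp
    refine Finset.mem_filter.mpr ⟨Finset.mem_univ _, fun h => hlj h.symm, ?_⟩
    show (σ * Equiv.swap j l) l = i
    rw [Perm.mul_apply, Equiv.swap_apply_right]
    exact hσj
  · rintro ⟨j, l, σ⟩ hp
    show ((j : Fin n), (l : Fin n), σ * Equiv.swap j l * Equiv.swap l j) = (j, l, σ)
    rw [Equiv.swap_comm l j, mul_assoc, Equiv.swap_mul_self, mul_one]

end PiolaAux

/-- Piola identity: each column of the adjugate of the Jacobian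
matrix of a C² map `X : ℝⁿ → ℝⁿ` is divergence-free: `∑ⱼ ∂ⱼ[(adj DX)ⱼᵢ] = 0`. -/
theorem piola_identity {n : ℕ} (hn : 1 ≤ n) (X : (Fin n → ℝ) → (Fin n → ℝ))
    (hX : ContDiff ℝ 2 X) (i : Fin n) (x : Fin n → ℝ) :
    ∑ j, pd j (fun y => (jacM X y).adjugate j i) x = 0 := by
  classical
  calc ∑ j, pd j (fun y => (jacM X y).adjugate j i) x
      = ∑ j, ∑ σ ∈ Finset.univ.filter (fun σ : Equiv.Perm (Fin n) => σ j = i),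
          ((Equiv.Perm.sign σ : ℤ) : ℝ) * ∑ l ∈ Finset.univ.erase j,
            (∏ k ∈ (Finset.univ.erase j).erase l, PiolaAux.aEnt X (σ k) k x)
              * pd j (PiolaAux.aEnt X (σ l) l) x := by
        refine Finset.sum_congr rfl fun j _ => ?_
        rw [show (fun y => (jacM X y).adjugate j i)
            = fun y => ∑ σ ∈ Finset.univ.filter (fun σ : Equiv.Perm (Fin n) => σ j = i),
              ((Equiv.Perm.sign σ : ℤ) : ℝ) * ∏ k ∈ Finset.univ.erase j,
                PiolaAux.aEnt X (σ k) k y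
          from funext fun y => PiolaAux.adj_eq X i j y]
        exact PiolaAux.row_deriv X hX i j x
    _ = 0 := PiolaAux.triple_zero X hX i x
end

section
/- Let n ≥ 2 and let X : ℝⁿ → ℝⁿ be a C² diffeomorphism whose Jacobian determinant J(x) = det DX(x) is positive everywhere. Let f : ℝⁿ → ℝ be of class C¹ and set f̄ = f ∘ X. Then for every x ∈ ℝⁿ and every i ∈ {1,…,n}, (∂ᵢf)(X(x)) = J(x)⁻¹ Σⱼ ∂ⱼ [ (adj(DX))ⱼᵢ f̄ ] (x); that is, (∇f) ∘ X = J⁻¹ div( adj(DX) f̄ ), where adj(DX) f̄ is the matrix field adj(DX) multiplied by the scalar f̄ and div is the column-wise matrix divergence. -/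
open scoped BigOperators
open MeasureTheory

namespace GradCov

variable {n : ℕ}

/-- Entry function of the Jacobian matrix field. -/
noncomputable def Aent (F : (Fin n → ℝ) → (Fin n → ℝ)) (k l : Fin n) :
    (Fin n → ℝ) → ℝ :=
  fun y => pd l (fun z => F z k) y

lemma clm_apply_eq_sum (L : (Fin n → ℝ) →L[ℝ] ℝ) (w : Fin n → ℝ) :
    L w = ∑ k, w k * L (Pi.single k 1) := by
  have hw : w = ∑ k, Pi.single k (w k) := (Finset.univ_sum_single w).symm
  have hs : ∀ k : Fin n, (Pi.single k (w k) : Fin n → ℝ)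
      = w k • (Pi.single k 1 : Fin n → ℝ) := by
    intro k; ext j
    by_cases h : j = k <;> simp [h, Pi.single_apply, smul_eq_mul]
  conv_lhs => rw [hw]
  rw [map_sum]
  exact Finset.sum_congr rfl fun k _ => by rw [hs k, ContinuousLinearMap.map_smul, smul_eq_mul]

lemma fderiv_component (g : (Fin n → ℝ) → (Fin n → ℝ)) {x : Fin n → ℝ}
    (hg : DifferentiableAt ℝ g x) (v : Fin n → ℝ) (k : Fin n) :
    fderiv ℝ (fun y => g y k) x v = fderiv ℝ g x v k := by
  have h1 : (fun y => g y k)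
      = (ContinuousLinearMap.proj k (R := ℝ) (φ := fun _ : Fin n => ℝ)) ∘ g := rfl
  rw [h1, fderiv_comp x (ContinuousLinearMap.proj k).differentiableAt hg,
    ContinuousLinearMap.fderiv, ContinuousLinearMap.comp_apply,
    ContinuousLinearMap.proj_apply]

lemma contDiff_comp_proj {F : (Fin n → ℝ) → (Fin n → ℝ)} (hF : ContDiff ℝ 2 F) (k : Fin n) :
    ContDiff ℝ 2 (fun y => F y k) :=
  (ContinuousLinearMap.proj k (R := ℝ) (φ := fun _ : Fin n => ℝ)).contDiff.comp hF

lemma contDiff_Aent {F : (Fin n → ℝ) → (Fin n → ℝ)} (hF : ContDiff ℝ 2 F) (k l : Fin n) :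
    ContDiff ℝ 1 (Aent F k l) := by
  have h1 : ContDiff ℝ 1 (fderiv ℝ (fun y => F y k)) :=
    (contDiff_comp_proj hF k).fderiv_right (le_refl 2)
  exact (ContinuousLinearMap.apply ℝ ℝ (Pi.single l 1)).contDiff.comp h1

lemma diff_Aent {F : (Fin n → ℝ) → (Fin n → ℝ)} (hF : ContDiff ℝ 2 F) (k l : Fin n)
    (x : Fin n → ℝ) : DifferentiableAt ℝ (Aent F k l) x :=
  ((contDiff_Aent hF k l).differentiable one_ne_zero).differentiableAt

lemma pd_pd_symm {g : (Fin n → ℝ) → ℝ} (hg : ContDiff ℝ 2 g) (x : Fin n → ℝ) (j m : Fin n) :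
    pd j (pd m g) x = pd m (pd j g) x := by
  have hdd : DifferentiableAt ℝ (fderiv ℝ g) x :=
    ((hg.fderiv_right (m := 1) (le_refl 2)).differentiable one_ne_zero).differentiableAt
  have key : ∀ v w : Fin n → ℝ,
      fderiv ℝ (fun y => fderiv ℝ g y w) x v = fderiv ℝ (fderiv ℝ g) x v w := by
    intro v w
    have h1 : (fun y => fderiv ℝ g y w)
        = (ContinuousLinearMap.apply ℝ ℝ w) ∘ (fderiv ℝ g) := rfl
    rw [h1, fderiv_comp x (ContinuousLinearMap.apply ℝ ℝ w).differentiableAt hdd,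
      ContinuousLinearMap.fderiv, ContinuousLinearMap.comp_apply]
    rfl
  have hsymm := (hg.contDiffAt (x := x)).isSymmSndFDerivAt (by simp)
  show fderiv ℝ (fun y => fderiv ℝ g y (Pi.single m 1)) x (Pi.single j 1)
      = fderiv ℝ (fun y => fderiv ℝ g y (Pi.single j 1)) x (Pi.single m 1)
  rw [key, key]
  exact hsymm (Pi.single j 1) (Pi.single m 1)

/-- Adjugate entry as a sum over permutations. -/
lemma adjugate_entry_eq (M : Matrix (Fin n) (Fin n) ℝ) (j i : Fin n) :
    M.adjugate j i
      = ∑ σ ∈ Finset.univ.filter (fun σ : Equiv.Perm (Fin n) => σ j = i),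
          ((Equiv.Perm.sign σ : ℤ) : ℝ) * ∏ k ∈ Finset.univ.erase j, M (σ k) k := by
  rw [Matrix.adjugate_apply, Matrix.det_apply', Finset.sum_filter]
  refine Finset.sum_congr rfl fun σ _ => ?_
  by_cases h : σ j = i
  · rw [if_pos h, ← Finset.mul_prod_erase Finset.univ _ (Finset.mem_univ j)]
    have h1 : (M.updateRow i (Pi.single j 1)) (σ j) j = 1 := by
      rw [h, Matrix.updateRow_self, Pi.single_eq_same]
    rw [h1, one_mul]
    congr 1
    refine Finset.prod_congr rfl fun k hk => ?_
    have hkj : k ≠ j := Finset.ne_of_mem_erase hk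
    have hσk : σ k ≠ i := by
      rw [← h]; exact fun hc => hkj (σ.injective hc)
    rw [Matrix.updateRow_ne hσk]
  · rw [if_neg h]
    have hmem : σ.symm i ∈ Finset.univ := Finset.mem_univ _
    have hz : (M.updateRow i (Pi.single j 1)) (σ (σ.symm i)) (σ.symm i) = 0 := by
      rw [Equiv.apply_symm_apply, Matrix.updateRow_self]
      have : σ.symm i ≠ j := fun hc => h (by rw [← hc, Equiv.apply_symm_apply])
      exact Pi.single_eq_of_ne this 1
    have := Finset.prod_eq_zero (f := fun k => M.updateRow i (Pi.single j 1) (σ k) k) hmem hz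
    rw [this, mul_zero]

lemma pd_sum {ι : Type*} (s : Finset ι) (g : ι → (Fin n → ℝ) → ℝ) {x : Fin n → ℝ}
    (hg : ∀ a ∈ s, DifferentiableAt ℝ (g a) x) (j : Fin n) :
    pd j (fun y => ∑ a ∈ s, g a y) x = ∑ a ∈ s, pd j (g a) x := by
  unfold pd
  rw [fderiv_fun_sum hg, ContinuousLinearMap.sum_apply]

lemma pd_const_mul (c : ℝ) (g : (Fin n → ℝ) → ℝ) {x : Fin n → ℝ}
    (hg : DifferentiableAt ℝ g x) (j : Fin n) :
    pd j (fun y => c * g y) x = c * pd j g x := by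
  unfold pd
  rw [fderiv_const_mul hg c, ContinuousLinearMap.smul_apply, smul_eq_mul]

lemma pd_mul (g h : (Fin n → ℝ) → ℝ) {x : Fin n → ℝ}
    (hg : DifferentiableAt ℝ g x) (hh : DifferentiableAt ℝ h x) (j : Fin n) :
    pd j (fun y => g y * h y) x = pd j g x * h x + g x * pd j h x := by
  unfold pd
  rw [fderiv_fun_mul hg hh, ContinuousLinearMap.add_apply, ContinuousLinearMap.smul_apply,
    ContinuousLinearMap.smul_apply, smul_eq_mul, smul_eq_mul]
  ring

lemma pd_prod {ι : Type*} [DecidableEq ι] (u : Finset ι) (g : ι → (Fin n → ℝ) → ℝ)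
    {x : Fin n → ℝ} (hg : ∀ a ∈ u, DifferentiableAt ℝ (g a) x) (j : Fin n) :
    pd j (fun y => ∏ a ∈ u, g a y) x
      = ∑ a ∈ u, (∏ b ∈ u.erase a, g b x) * pd j (g a) x := by
  have h := HasFDerivAt.finset_prod (u := u) (g := g)
    (g' := fun a => fderiv ℝ (g a) x) (x := x)
    (fun a ha => (hg a ha).hasFDerivAt)
  unfold pd
  rw [h.fderiv, ContinuousLinearMap.sum_apply]
  exact Finset.sum_congr rfl fun a _ => by
    rw [ContinuousLinearMap.smul_apply, smul_eq_mul]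

/-- Product of Jacobian entries over `univ.erase j`. -/
noncomputable def Pfun (F : (Fin n → ℝ) → (Fin n → ℝ)) (σ : Equiv.Perm (Fin n)) (j : Fin n) :
    (Fin n → ℝ) → ℝ :=
  fun y => ∏ k ∈ Finset.univ.erase j, Aent F (σ k) k y

lemma adj_field_eq (F : (Fin n → ℝ) → (Fin n → ℝ)) (j i : Fin n) (y : Fin n → ℝ) :
    (jacM F y).adjugate j i
      = ∑ σ ∈ Finset.univ.filter (fun σ : Equiv.Perm (Fin n) => σ j = i),
          ((Equiv.Perm.sign σ : ℤ) : ℝ) * Pfun F σ j y :=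
  adjugate_entry_eq (jacM F y) j i

lemma diff_Pfun {F : (Fin n → ℝ) → (Fin n → ℝ)} (hF : ContDiff ℝ 2 F)
    (σ : Equiv.Perm (Fin n)) (j : Fin n) (x : Fin n → ℝ) :
    DifferentiableAt ℝ (Pfun F σ j) x :=
  (HasFDerivAt.finset_prod
    (fun k (_ : k ∈ Finset.univ.erase j) => (diff_Aent hF (σ k) k x).hasFDerivAt)).differentiableAt

lemma pd_Pfun {F : (Fin n → ℝ) → (Fin n → ℝ)} (hF : ContDiff ℝ 2 F)
    (σ : Equiv.Perm (Fin n)) (j : Fin n) (x : Fin n → ℝ) (j' : Fin n) :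
    pd j' (Pfun F σ j) x = ∑ m ∈ Finset.univ.erase j,
      (∏ k ∈ (Finset.univ.erase j).erase m, Aent F (σ k) k x)
        * pd j' (Aent F (σ m) m) x :=
  pd_prod (Finset.univ.erase j) (fun k => Aent F (σ k) k)
    (fun k _ => diff_Aent hF (σ k) k x) j'

lemma diff_adjfield {F : (Fin n → ℝ) → (Fin n → ℝ)} (hF : ContDiff ℝ 2 F)
    (j i : Fin n) (x : Fin n → ℝ) :
    DifferentiableAt ℝ (fun y => (jacM F y).adjugate j i) x := by
  have hrw : (fun y => (jacM F y).adjugate j i) = fun y =>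
      ∑ σ ∈ Finset.univ.filter (fun σ : Equiv.Perm (Fin n) => σ j = i),
        ((Equiv.Perm.sign σ : ℤ) : ℝ) * Pfun F σ j y := funext (adj_field_eq F j i)
  rw [hrw]
  exact DifferentiableAt.fun_sum fun σ _ => (diff_Pfun hF σ j x).const_mul _

/-- Summand in the expanded divergence of an adjugate column. -/
noncomputable def Tterm (F : (Fin n → ℝ) → (Fin n → ℝ)) (x : Fin n → ℝ) (i : Fin n)
    (j : Fin n) (σ : Equiv.Perm (Fin n)) (m : Fin n) : ℝ :=
  if m ≠ j ∧ σ j = i then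
    ((Equiv.Perm.sign σ : ℤ) : ℝ) *
      ((∏ k ∈ (Finset.univ.erase j).erase m, Aent F (σ k) k x)
        * pd j (Aent F (σ m) m) x)
  else 0

/-- The Piola identity: the columns of the adjugate of a Jacobian are divergence free. -/
lemma piola {F : (Fin n → ℝ) → (Fin n → ℝ)} (hF : ContDiff ℝ 2 F)
    (x : Fin n → ℝ) (i : Fin n) :
    ∑ j, pd j (fun y => (jacM F y).adjugate j i) x = 0 := by
  classical
  have step1 : ∑ j, pd j (fun y => (jacM F y).adjugate j i) x
      = ∑ j, ∑ σ : Equiv.Perm (Fin n), ∑ m, Tterm F x i j σ m := by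
    refine Finset.sum_congr rfl fun j _ => ?_
    have hrw : (fun y => (jacM F y).adjugate j i) = fun y =>
        ∑ σ ∈ Finset.univ.filter (fun σ : Equiv.Perm (Fin n) => σ j = i),
          ((Equiv.Perm.sign σ : ℤ) : ℝ) * Pfun F σ j y := funext (adj_field_eq F j i)
    rw [hrw, pd_sum _ _ (fun σ _ => ((diff_Pfun hF σ j x).const_mul _)) j,
      Finset.sum_filter]
    refine Finset.sum_congr rfl fun σ _ => ?_
    by_cases hp : σ j = i
    · rw [if_pos hp, pd_const_mul _ _ (diff_Pfun hF σ j x) j, pd_Pfun hF σ j x j,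
        Finset.mul_sum]
      have h0 : Tterm F x i j σ j = 0 := by
        unfold Tterm
        exact if_neg (fun h => h.1 rfl)
      refine Eq.trans ?_ (Finset.sum_erase Finset.univ h0)
      refine Finset.sum_congr rfl fun m hm => ?_
      have hmj : m ≠ j := Finset.ne_of_mem_erase hm
      unfold Tterm
      rw [if_pos ⟨hmj, hp⟩]
    · rw [if_neg hp]
      symm
      refine Finset.sum_eq_zero fun m _ => ?_
      unfold Tterm
      exact if_neg (fun h => hp h.2)
  have step2 : (∑ t : Fin n × Equiv.Perm (Fin n) × Fin n, Tterm F x i t.1 t.2.1 t.2.2)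
      = ∑ j, ∑ σ : Equiv.Perm (Fin n), ∑ m, Tterm F x i j σ m := by
    rw [Fintype.sum_prod_type]
    refine Finset.sum_congr rfl fun j _ => ?_
    rw [Fintype.sum_prod_type]
  rw [step1, ← step2]
  refine Finset.sum_ninvolution
    (fun t => (t.2.2, t.2.1 * Equiv.swap t.1 t.2.2, t.1)) ?_ ?_
    (fun t => Finset.mem_univ _) ?_
  · -- cancellation
    rintro ⟨j, σ, m⟩
    show Tterm F x i j σ m + Tterm F x i m (σ * Equiv.swap j m) j = 0
    by_cases hc : m ≠ j ∧ σ j = i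
    · obtain ⟨hmj, hσ⟩ := hc
      have hc2 : j ≠ m ∧ (σ * Equiv.swap j m) m = i :=
        ⟨Ne.symm hmj, by rw [Equiv.Perm.mul_apply, Equiv.swap_apply_right, hσ]⟩
      have e1 : Tterm F x i j σ m
          = ((Equiv.Perm.sign σ : ℤ) : ℝ) *
              ((∏ k ∈ (Finset.univ.erase j).erase m, Aent F (σ k) k x) *
                pd j (Aent F (σ m) m) x) := by
        unfold Tterm
        rw [if_pos ⟨hmj, hσ⟩]
      have e2 : Tterm F x i m (σ * Equiv.swap j m) j
          = ((Equiv.Perm.sign (σ * Equiv.swap j m) : ℤ) : ℝ) *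
              ((∏ k ∈ (Finset.univ.erase m).erase j,
                  Aent F ((σ * Equiv.swap j m) k) k x) *
                pd m (Aent F ((σ * Equiv.swap j m) j) j) x) := by
        unfold Tterm
        rw [if_pos hc2]
      have hsign : ((Equiv.Perm.sign (σ * Equiv.swap j m) : ℤ) : ℝ)
          = -(((Equiv.Perm.sign σ : ℤ) : ℝ)) := by
        rw [Equiv.Perm.sign_mul, Equiv.Perm.sign_swap (Ne.symm hmj)]
        simp
      have hprod : ∏ k ∈ (Finset.univ.erase m).erase j,
            Aent F ((σ * Equiv.swap j m) k) k x
          = ∏ k ∈ (Finset.univ.erase j).erase m, Aent F (σ k) k x := by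
        rw [Finset.erase_right_comm]
        refine Finset.prod_congr rfl fun k hk => ?_
        have hkm : k ≠ m := Finset.ne_of_mem_erase hk
        have hkj : k ≠ j := Finset.ne_of_mem_erase (Finset.mem_of_mem_erase hk)
        rw [Equiv.Perm.mul_apply, Equiv.swap_apply_of_ne_of_ne hkj hkm]
      have hD : pd m (Aent F ((σ * Equiv.swap j m) j) j) x
          = pd j (Aent F (σ m) m) x := by
        have h0 : (σ * Equiv.swap j m) j = σ m := by
          rw [Equiv.Perm.mul_apply, Equiv.swap_apply_left]
        rw [h0]
        exact (pd_pd_symm (contDiff_comp_proj hF (σ m)) x j m).symm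
      rw [e1, e2, hsign, hprod, hD]
      ring
    · have h1 : Tterm F x i j σ m = 0 := by
        unfold Tterm; exact if_neg hc
      have h2 : Tterm F x i m (σ * Equiv.swap j m) j = 0 := by
        unfold Tterm
        refine if_neg ?_
        rintro ⟨h1', h2'⟩
        exact hc ⟨Ne.symm h1', by
          rwa [Equiv.Perm.mul_apply, Equiv.swap_apply_right] at h2'⟩
      rw [h1, h2, add_zero]
  · -- no fixed points on nonzero terms
    rintro ⟨j, σ, m⟩ hT0 heq
    have hmj : m = j := congrArg Prod.fst heq
    refine hT0 ?_
    show Tterm F x i j σ m = 0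
    unfold Tterm
    exact if_neg (fun h => h.1 hmj)
  · -- involution
    rintro ⟨j, σ, m⟩
    refine Prod.ext rfl (Prod.ext ?_ rfl)
    show σ * Equiv.swap j m * Equiv.swap m j = σ
    rw [Equiv.swap_comm m j, mul_assoc, Equiv.swap_mul_self, mul_one]

/-- Chain rule for `pd`. -/
lemma pd_comp {F : (Fin n → ℝ) → (Fin n → ℝ)} (hF : ContDiff ℝ 2 F)
    {f : (Fin n → ℝ) → ℝ} (hf : ContDiff ℝ 1 f) (x : Fin n → ℝ) (j : Fin n) :
    pd j (fun y => f (F y)) x = ∑ k, pd k f (F x) * Aent F k j x := by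
  have hdF : DifferentiableAt ℝ F x :=
    (hF.differentiable (by norm_num)).differentiableAt
  have hdf : DifferentiableAt ℝ f (F x) :=
    (hf.differentiable one_ne_zero).differentiableAt
  have h0 : (fun y => f (F y)) = f ∘ F := rfl
  show fderiv ℝ (fun y => f (F y)) x (Pi.single j 1) = _
  rw [h0, fderiv_comp x hdf hdF, ContinuousLinearMap.comp_apply,
    clm_apply_eq_sum (fderiv ℝ f (F x)) (fderiv ℝ F x (Pi.single j 1))]
  refine Finset.sum_congr rfl fun k _ => ?_
  rw [mul_comm]
  congr 1
  exact (fderiv_component F hdF (Pi.single j 1) k).symm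

end GradCov

/-- for a C² diffeomorphism `X` with positive Jacobian determinant `J`
and `f̄ = f ∘ X`, one has `(∇f) ∘ X = J⁻¹ div(adj(DX) f̄)`, i.e.
`(∂ᵢf)(X x) = J(x)⁻¹ ∑ⱼ ∂ⱼ[(adj DX)ⱼᵢ f̄](x)`. -/


theorem grad_lagrangian_change_of_variables {n : ℕ} (hn : 2 ≤ n)
    (e : (Fin n → ℝ) ≃ (Fin n → ℝ))
    (hX : ContDiff ℝ 2 ⇑e) (hXinv : ContDiff ℝ 2 ⇑e.symm)
    (hJ : ∀ x, 0 < (jacM (⇑e) x).det)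
    (f : (Fin n → ℝ) → ℝ) (hf : ContDiff ℝ 1 f)
    (x : Fin n → ℝ) (i : Fin n) :
    pd i f (e x)
      = ((jacM (⇑e) x).det)⁻¹ *
          ∑ j, pd j (fun y => (jacM (⇑e) y).adjugate j i * f (e y)) x := by
  classical
  have hdfb : DifferentiableAt ℝ (fun y => f (e y)) x := by
    have h1 : ContDiff ℝ 1 (fun y => f (e y)) :=
      hf.comp (hX.of_le (by norm_num))
    exact (h1.differentiable one_ne_zero).differentiableAt
  -- product rule in each term
  have hsum : ∑ j, pd j (fun y => (jacM (⇑e) y).adjugate j i * f (e y)) x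
      = (∑ j, pd j (fun y => (jacM (⇑e) y).adjugate j i) x) * f (e x)
        + ∑ j, (jacM (⇑e) x).adjugate j i * pd j (fun y => f (e y)) x := by
    rw [Finset.sum_mul, ← Finset.sum_add_distrib]
    refine Finset.sum_congr rfl fun j _ => ?_
    exact GradCov.pd_mul _ _ (GradCov.diff_adjfield hX j i x) hdfb j
  rw [hsum, GradCov.piola hX x i, zero_mul, zero_add]
  -- chain rule and the adjugate identity
  have hchain : ∀ j, pd j (fun y => f (e y)) x
      = ∑ k, pd k f (e x) * GradCov.Aent (⇑e) k j x := fun j =>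
    GradCov.pd_comp hX hf x j
  have key : ∑ j, (jacM (⇑e) x).adjugate j i * pd j (fun y => f (e y)) x
      = (jacM (⇑e) x).det * pd i f (e x) := by
    calc ∑ j, (jacM (⇑e) x).adjugate j i * pd j (fun y => f (e y)) x
        = ∑ j, ∑ k, pd k f (e x) * (jacM (⇑e) x k j * (jacM (⇑e) x).adjugate j i) := by
          refine Finset.sum_congr rfl fun j _ => ?_
          rw [hchain j, Finset.mul_sum]
          exact Finset.sum_congr rfl fun k _ => by
            show (jacM (⇑e) x).adjugate j i * (pd k f (e x) * GradCov.Aent (⇑e) k j x) = _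
            have : jacM (⇑e) x k j = GradCov.Aent (⇑e) k j x := rfl
            rw [this]; ring
      _ = ∑ k, pd k f (e x) * ∑ j, jacM (⇑e) x k j * (jacM (⇑e) x).adjugate j i := by
          rw [Finset.sum_comm]
          exact Finset.sum_congr rfl fun k _ => by rw [Finset.mul_sum]
      _ = ∑ k, pd k f (e x) * ((jacM (⇑e) x) * (jacM (⇑e) x).adjugate) k i := by
          exact Finset.sum_congr rfl fun k _ => by rw [Matrix.mul_apply]
      _ = ∑ k, pd k f (e x) * ((jacM (⇑e) x).det * if k = i then 1 else 0) := by
          refine Finset.sum_congr rfl fun k _ => ?_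
          rw [Matrix.mul_adjugate]
          simp [Matrix.smul_apply, Matrix.one_apply]
      _ = (jacM (⇑e) x).det * pd i f (e x) := by
          have hptw : ∀ k, pd k f (e x) * ((jacM (⇑e) x).det * if k = i then 1 else 0)
              = if k = i then (jacM (⇑e) x).det * pd k f (e x) else 0 := by
            intro k; by_cases h : k = i <;> simp [h] <;> ring
          rw [Finset.sum_congr rfl fun k _ => hptw k,
            Finset.sum_ite_eq' Finset.univ i
              (fun k => (jacM (⇑e) x).det * pd k f (e x))]
          simp
  rw [key, inv_mul_cancel_left₀ (hJ x).ne']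
end

section
/- Let n ≥ 2, T > 0, and let v̄ : [0,T] × ℝⁿ → ℝⁿ be continuous and twice continuously differentiable with respect to x, with all spatial derivatives up to order 2 continuous on [0,T] × ℝⁿ. Define X_v̄(t,x) = x + ∫₀ᵗ v̄(τ,x) dτ. Then for every (t,x) ∈ [0,T] × ℝⁿ the Jacobian determinant J_v̄(t,x) = det DₓX_v̄(t,x) is differentiable in t and satisfies ∂ₜ J_v̄(t,x) = div( adj(DₓX_v̄(t,·)) v̄(t,·) )(x), where adj(DₓX_v̄) v̄ is the pointwise matrix–vector product. Consequently, if div( adj(DₓX_v̄(t,·)) v̄(t,·) ) ≡ 0 on [0,T] × ℝⁿ, then J_v̄ ≡ 1, i.e. X_v̄(t,·) has unit Jacobian determinant for all t. -/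
open scoped BigOperators
open MeasureTheory

/-- The Lagrangian flow map `X_v̄(t,x) = x + ∫₀ᵗ v̄(τ,x) dτ`. -/
noncomputable def lagFlow {n : ℕ} (v : ℝ → (Fin n → ℝ) → (Fin n → ℝ))
    (t : ℝ) (x : Fin n → ℝ) : Fin n → ℝ :=
  x + ∫ τ in (0 : ℝ)..t, v τ x


open scoped BigOperators
open Finset

variable {n : ℕ}

/-- Permutation expansion of the adjugate. -/
lemma adj_perm (M : Matrix (Fin n) (Fin n) ℝ) (i j : Fin n) :
    M.adjugate i j = ∑ σ ∈ univ.filter (fun σ : Equiv.Perm (Fin n) => σ i = j),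
      ((Equiv.Perm.sign σ : ℤ) : ℝ) * ∏ k ∈ univ.erase i, M (σ k) k := by
  rw [Matrix.adjugate_apply, Matrix.det_apply']
  rw [← Finset.sum_filter_add_sum_filter_not univ (fun σ : Equiv.Perm (Fin n) => σ i = j)]
  have h2 : ∑ σ ∈ univ.filter (fun σ : Equiv.Perm (Fin n) => ¬ σ i = j),
      ((Equiv.Perm.sign σ : ℤ) : ℝ) * ∏ k, (M.updateRow j (Pi.single i 1)) (σ k) k = 0 := by
    apply Finset.sum_eq_zero
    intro σ hσ
    rw [Finset.mem_filter] at hσ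
    have hki : σ.symm j ≠ i := by
      intro h; apply hσ.2; rw [← h]; simp
    have : (M.updateRow j (Pi.single i 1)) (σ (σ.symm j)) (σ.symm j) = 0 := by
      rw [Equiv.apply_symm_apply, Matrix.updateRow_self, Pi.single_apply, if_neg hki]
    exact mul_eq_zero_of_right _ (Finset.prod_eq_zero (Finset.mem_univ (σ.symm j)) this)
  rw [h2, add_zero]
  apply Finset.sum_congr rfl
  intro σ hσ
  rw [Finset.mem_filter] at hσ
  congr 1
  rw [← Finset.mul_prod_erase univ _ (Finset.mem_univ i)]
  have h1 : (M.updateRow j (Pi.single i 1)) (σ i) i = 1 := by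
    rw [hσ.2, Matrix.updateRow_self, Pi.single_eq_same]
  rw [h1, one_mul]
  apply Finset.prod_congr rfl
  intro k hk
  rw [Finset.mem_erase] at hk
  have : σ k ≠ j := by
    intro h; exact hk.1 (σ.injective (h.trans hσ.2.symm))
  rw [Matrix.updateRow_ne this]

/-- Jacobi trace identity. -/
lemma jacobi_trace (M H : Matrix (Fin n) (Fin n) ℝ) :
    ∑ σ : Equiv.Perm (Fin n), ((Equiv.Perm.sign σ : ℤ) : ℝ) *
        ∑ i, (∏ k ∈ univ.erase i, M (σ k) k) * H (σ i) i
      = ∑ i, ∑ j, M.adjugate i j * H j i := by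
  have : ∀ i : Fin n, ∑ j, M.adjugate i j * H j i
      = ∑ σ : Equiv.Perm (Fin n), ((Equiv.Perm.sign σ : ℤ) : ℝ) *
          ((∏ k ∈ univ.erase i, M (σ k) k) * H (σ i) i) := by
    intro i
    have : ∀ j, M.adjugate i j * H j i = ∑ σ ∈ univ.filter (fun σ : Equiv.Perm (Fin n) => σ i = j),
        ((Equiv.Perm.sign σ : ℤ) : ℝ) * ((∏ k ∈ univ.erase i, M (σ k) k) * H (σ i) i) := by
      intro j
      rw [adj_perm, Finset.sum_mul]
      apply Finset.sum_congr rfl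
      intro σ hσ
      rw [Finset.mem_filter] at hσ
      rw [hσ.2]; ring
    rw [Finset.sum_congr rfl (fun j _ => this j)]
    rw [← Finset.sum_fiberwise univ (fun σ : Equiv.Perm (Fin n) => σ i) _]
  rw [Finset.sum_congr rfl (fun i (_ : i ∈ univ) => this i), Finset.sum_comm]
  simp [Finset.mul_sum]

/-- Piola-type cancellation. -/
lemma piola_alg (j : Fin n) (M : Matrix (Fin n) (Fin n) ℝ) (B : Fin n → Fin n → Fin n → ℝ)
    (hB : ∀ r p q, B r p q = B q p r) :
    ∑ i, ∑ σ ∈ univ.filter (fun σ : Equiv.Perm (Fin n) => σ i = j),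
      ((Equiv.Perm.sign σ : ℤ) : ℝ) *
        ∑ l ∈ univ.erase i, (∏ k ∈ (univ.erase i).erase l, M (σ k) k) * B i (σ l) l = 0 := by
  classical
  set F : Fin n × Equiv.Perm (Fin n) × Fin n → ℝ := fun p =>
    if p.2.1 p.1 = j ∧ p.2.2 ≠ p.1 then
      ((Equiv.Perm.sign p.2.1 : ℤ) : ℝ) *
        ((∏ k ∈ (univ.erase p.1).erase p.2.2, M (p.2.1 k) k) * B p.1 (p.2.1 p.2.2) p.2.2)
    else 0 with hF
  have key : ∑ p : Fin n × Equiv.Perm (Fin n) × Fin n, F p = 0 := by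
    apply Finset.sum_ninvolution (fun p => (p.2.2, p.2.1 * Equiv.swap p.1 p.2.2, p.1))
    · rintro ⟨i, σ, l⟩
      by_cases hc : σ i = j ∧ l ≠ i
      · have hli : l ≠ i := hc.2
        have hc' : (σ * Equiv.swap i l) l = j ∧ i ≠ l := by
          constructor
          · simp [Equiv.Perm.mul_apply, Equiv.swap_apply_right, hc.1]
          · exact hli.symm
        rw [hF]
        simp only [if_pos hc, if_pos hc']
        have hsign : (((Equiv.Perm.sign (σ * Equiv.swap i l) : ℤ) : ℝ))
            = -((Equiv.Perm.sign σ : ℤ) : ℝ) := by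
          rw [Equiv.Perm.sign_mul, Equiv.Perm.sign_swap hli.symm]
          push_cast
          ring
        have hprod : ∏ k ∈ (univ.erase l).erase i, M ((σ * Equiv.swap i l) k) k
            = ∏ k ∈ (univ.erase i).erase l, M (σ k) k := by
          rw [Finset.erase_right_comm]
          apply Finset.prod_congr rfl
          intro k hk
          rw [Finset.mem_erase, Finset.mem_erase] at hk
          rw [Equiv.Perm.mul_apply, Equiv.swap_apply_of_ne_of_ne hk.2.1 hk.1]
        have hswap : (σ * Equiv.swap i l) i = σ l := by
          simp [Equiv.Perm.mul_apply, Equiv.swap_apply_left]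
        rw [hsign, hprod, hswap]
        rw [hB i (σ l) l]
        ring
      · have hc' : ¬((σ * Equiv.swap i l) l = j ∧ i ≠ l) := by
          intro h
          apply hc
          refine ⟨?_, h.2.symm⟩
          have := h.1
          rwa [Equiv.Perm.mul_apply, Equiv.swap_apply_right] at this
        rw [hF]; simp only [if_neg hc, if_neg hc']; ring
    · rintro ⟨i, σ, l⟩ hne heq
      apply hne
      have hli : l = i := congrArg Prod.fst heq
      simp only [hF]
      rw [if_neg]
      rintro ⟨-, h2⟩
      exact h2 hli
    · intro p; exact Finset.mem_univ _
    · rintro ⟨i, σ, l⟩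
      have hss : σ * Equiv.swap i l * Equiv.swap l i = σ := by
        rw [Equiv.swap_comm l i, mul_assoc, Equiv.swap_mul_self, mul_one]
      simp [hss]
  rw [← key]
  simp only [Fintype.sum_prod_type]
  apply Finset.sum_congr rfl
  intro i _
  rw [Finset.sum_filter]
  apply Finset.sum_congr rfl
  intro σ _
  by_cases hσ : σ i = j
  · rw [if_pos hσ, Finset.mul_sum, ← Finset.sum_erase_add univ _ (Finset.mem_univ i)]
    have h0 : F (i, σ, i) = 0 := by
      simp only [hF]
      rw [if_neg]
      rintro ⟨-, h2⟩
      exact h2 rfl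
    rw [h0, add_zero]
    apply Finset.sum_congr rfl
    intro l hl
    have hl' : l ≠ i := (Finset.mem_erase.1 hl).1
    simp only [hF]
    rw [if_pos ⟨hσ, hl'⟩]
  · rw [if_neg hσ]
    symm
    apply Finset.sum_eq_zero
    intro l _
    simp only [hF]
    rw [if_neg]
    rintro ⟨h1, -⟩
    exact hσ h1

open scoped BigOperators
open MeasureTheory Finset

variable {n : ℕ}

lemma clm_apply_eq_sum (f : (Fin n → ℝ) →L[ℝ] ℝ) (u : Fin n → ℝ) :
    f u = ∑ j, u j * f (Pi.single j 1) := by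
  have hu : u = ∑ j, u j • (Pi.single j 1 : Fin n → ℝ) := by
    ext k
    simp [Pi.single_apply]
  conv_lhs => rw [hu]
  rw [map_sum]
  simp [smul_eq_mul]

lemma clm_eq_sum (f : (Fin n → ℝ) →L[ℝ] ℝ) :
    f = ∑ j, f (Pi.single j 1) •
      (ContinuousLinearMap.proj j : (Fin n → ℝ) →L[ℝ] ℝ) := by
  apply ContinuousLinearMap.ext
  intro u
  rw [clm_apply_eq_sum f u]
  simp [ContinuousLinearMap.sum_apply, mul_comm]

lemma clm_norm_le (f : (Fin n → ℝ) →L[ℝ] ℝ) :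
    ‖f‖ ≤ ∑ j, |f (Pi.single j 1)| := by
  refine ContinuousLinearMap.opNorm_le_bound f (by positivity) (fun u => ?_)
  rw [clm_apply_eq_sum f u, Finset.sum_mul]
  refine (norm_sum_le _ _).trans (Finset.sum_le_sum fun j _ => ?_)
  rw [Real.norm_eq_abs, abs_mul, mul_comm]
  exact mul_le_mul_of_nonneg_left ((Real.norm_eq_abs (u j)) ▸ norm_le_pi_norm u j) (abs_nonneg _)

lemma contOn_clm_sum {α : Type*} [TopologicalSpace α] {s : Set α} (c : α → (Fin n → ℝ) →L[ℝ] ℝ)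
    (h : ∀ j, ContinuousOn (fun a => c a (Pi.single j 1)) s) :
    ContinuousOn c s := by
  have : (fun a => c a) = fun a => ∑ j, c a (Pi.single j 1) •
      (ContinuousLinearMap.proj (R := ℝ) (φ := fun _ : Fin n => ℝ) j) := by
    funext a; exact clm_eq_sum (c a)
  have h2 : ContinuousOn (fun a => ∑ j, c a (Pi.single j 1) •
      (ContinuousLinearMap.proj (R := ℝ) (φ := fun _ : Fin n => ℝ) j)) s :=
    continuousOn_finset_sum _ (fun j _ => (h j).smul continuousOn_const)
  exact h2.congr (fun a _ => clm_eq_sum (c a))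

/-- Differentiation under the interval integral, specialized to our setting. -/
lemma key_param {T : ℝ} (f : ℝ → (Fin n → ℝ) → ℝ)
    (hfd : ∀ τ ∈ Set.Icc (0:ℝ) T, Differentiable ℝ (f τ))
    (hf_cont : ContinuousOn (fun p : ℝ × (Fin n → ℝ) => f p.1 p.2) (Set.Icc 0 T ×ˢ Set.univ))
    (hdf_cont : ∀ l : Fin n, ContinuousOn
      (fun p : ℝ × (Fin n → ℝ) => fderiv ℝ (f p.1) p.2 (Pi.single l 1))
      (Set.Icc 0 T ×ˢ Set.univ))
    {t : ℝ} (ht : t ∈ Set.Icc (0:ℝ) T) (x : Fin n → ℝ) :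
    HasFDerivAt (fun y => ∫ τ in (0:ℝ)..t, f τ y) (∫ τ in (0:ℝ)..t, fderiv ℝ (f τ) x) x ∧
    ∀ l, (∫ τ in (0:ℝ)..t, fderiv ℝ (f τ) x) (Pi.single l 1)
        = ∫ τ in (0:ℝ)..t, fderiv ℝ (f τ) x (Pi.single l 1) := by
  have huIcc : Set.uIcc (0:ℝ) t ⊆ Set.Icc 0 T := by
    rw [Set.uIcc_of_le ht.1]
    exact Set.Icc_subset_Icc le_rfl ht.2
  have huIoc : Set.uIoc (0:ℝ) t ⊆ Set.Icc 0 T := by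
    rw [Set.uIoc_of_le ht.1]
    exact Set.Ioc_subset_Icc_self.trans (Set.Icc_subset_Icc le_rfl ht.2)
  have cont_τ : ∀ y : Fin n → ℝ, ContinuousOn (fun τ => f τ y) (Set.Icc 0 T) := by
    intro y
    have : ContinuousOn ((fun p : ℝ × (Fin n → ℝ) => f p.1 p.2) ∘ (fun τ => (τ, y)))
        (Set.Icc 0 T) := by
      apply hf_cont.comp (Continuous.continuousOn (continuous_id.prodMk continuous_const))
      intro τ hτ; exact ⟨hτ, trivial⟩
    exact this
  have dcont_τ : ∀ (l : Fin n) (y : Fin n → ℝ),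
      ContinuousOn (fun τ => fderiv ℝ (f τ) y (Pi.single l 1)) (Set.Icc 0 T) := by
    intro l y
    have : ContinuousOn ((fun p : ℝ × (Fin n → ℝ) => fderiv ℝ (f p.1) p.2 (Pi.single l 1)) ∘
        (fun τ => (τ, y))) (Set.Icc 0 T) := by
      apply (hdf_cont l).comp (Continuous.continuousOn (continuous_id.prodMk continuous_const))
      intro τ hτ; exact ⟨hτ, trivial⟩
    exact this
  have φ_cont : ContinuousOn (fun τ => fderiv ℝ (f τ) x) (Set.Icc 0 T) :=
    contOn_clm_sum _ (fun l => dcont_τ l x)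
  have φ_int : IntervalIntegrable (fun τ => fderiv ℝ (f τ) x) volume 0 t :=
    (φ_cont.mono huIcc).intervalIntegrable
  -- the bound
  have hKcomp : IsCompact (Set.Icc (0:ℝ) T ×ˢ Metric.closedBall x 1) :=
    isCompact_Icc.prod (isCompact_closedBall x 1)
  have hg_cont : ContinuousOn
      (fun p : ℝ × (Fin n → ℝ) => ∑ l, |fderiv ℝ (f p.1) p.2 (Pi.single l 1)|)
      (Set.Icc (0:ℝ) T ×ˢ Metric.closedBall x 1) := by
    apply (continuousOn_finset_sum _ (fun l _ => (hdf_cont l).abs)).mono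
    intro p hp; exact ⟨hp.1, trivial⟩
  obtain ⟨C, hC⟩ := hKcomp.exists_bound_of_continuousOn hg_cont
  have main : HasFDerivAt (fun y => ∫ τ in (0:ℝ)..t, f τ y)
      (∫ τ in (0:ℝ)..t, fderiv ℝ (f τ) x) x := by
    apply intervalIntegral.hasFDerivAt_integral_of_dominated_of_fderiv_le
      (F' := fun y τ => fderiv ℝ (f τ) y) (bound := fun _ => C) (s := Metric.ball x 1) (Metric.ball_mem_nhds x one_pos)
    · exact Filter.Eventually.of_forall (fun y =>
        ((cont_τ y).mono huIoc).aestronglyMeasurable measurableSet_uIoc)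
    · exact ((cont_τ x).mono huIcc).intervalIntegrable
    · exact (φ_cont.mono huIoc).aestronglyMeasurable measurableSet_uIoc
    · apply MeasureTheory.ae_of_all
      intro τ hτ y hy
      refine (clm_norm_le _).trans ?_
      have := hC (τ, y) ⟨huIoc hτ, Metric.ball_subset_closedBall hy⟩
      exact (le_abs_self _).trans ((Real.norm_eq_abs _) ▸ this)
    · exact intervalIntegrable_const
    · apply MeasureTheory.ae_of_all
      intro τ hτ y hy
      exact ((hfd τ (huIoc hτ)) y).hasFDerivAt
  refine ⟨main, fun l => ?_⟩
  exact ContinuousLinearMap.intervalIntegral_apply φ_int (Pi.single l 1)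

set_option maxHeartbeats 1000000 in
/-- the Jacobian determinant `J_v̄(t,x) = det DₓX_v̄(t,x)` of the
Lagrangian flow map satisfies `∂ₜJ_v̄ = div(adj(DₓX_v̄) v̄)`; hence if
`div(adj(DₓX_v̄) v̄) ≡ 0` then `J_v̄ ≡ 1`. -/
theorem jacobian_time_derivative {n : ℕ} (hn : 2 ≤ n) (T : ℝ) (hT : 0 < T)
    (v : ℝ → (Fin n → ℝ) → (Fin n → ℝ))
    (hv_cont : ContinuousOn (fun p : ℝ × (Fin n → ℝ) => v p.1 p.2)
      (Set.Icc 0 T ×ˢ Set.univ))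
    (hv_x : ∀ t ∈ Set.Icc (0 : ℝ) T, ContDiff ℝ 2 (v t))
    (hDv_cont : ∀ i j : Fin n, ContinuousOn
      (fun p : ℝ × (Fin n → ℝ) => jacM (v p.1) p.2 i j) (Set.Icc 0 T ×ˢ Set.univ))
    (hD2v_cont : ∀ i j l : Fin n, ContinuousOn
      (fun p : ℝ × (Fin n → ℝ) => pd l (fun y => jacM (v p.1) y i j) p.2)
      (Set.Icc 0 T ×ˢ Set.univ)) :
    (∀ t ∈ Set.Icc (0 : ℝ) T, ∀ x : Fin n → ℝ,
      HasDerivWithinAt (fun s => (jacM (lagFlow v s) x).det)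
        (∑ i, pd i (fun y => ∑ j, (jacM (lagFlow v t) y).adjugate i j * v t y j) x)
        (Set.Icc 0 T) t)
    ∧ ((∀ t ∈ Set.Icc (0 : ℝ) T, ∀ x : Fin n → ℝ,
          ∑ i, pd i (fun y => ∑ j, (jacM (lagFlow v t) y).adjugate i j * v t y j) x = 0) →
        ∀ t ∈ Set.Icc (0 : ℝ) T, ∀ x : Fin n → ℝ,
          (jacM (lagFlow v t) x).det = 1) := by
  classical
  have hv_comp_cont : ∀ i : Fin n, ContinuousOn
      (fun p : ℝ × (Fin n → ℝ) => v p.1 p.2 i) (Set.Icc 0 T ×ˢ Set.univ) :=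
    fun i => (continuous_apply i).comp_continuousOn hv_cont
  have hv_diff : ∀ τ ∈ Set.Icc (0:ℝ) T, ∀ i : Fin n, Differentiable ℝ (fun y => v τ y i) :=
    fun τ hτ i => ((contDiff_pi.mp (hv_x τ hτ) i).differentiable (by norm_num))
  -- first-order differentiation under the integral sign
  have key1 : ∀ t ∈ Set.Icc (0:ℝ) T, ∀ (x : Fin n → ℝ) (i : Fin n),
      HasFDerivAt (fun y => ∫ τ in (0:ℝ)..t, v τ y i)
        (∫ τ in (0:ℝ)..t, fderiv ℝ (fun y => v τ y i) x) x ∧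
      ∀ l, (∫ τ in (0:ℝ)..t, fderiv ℝ (fun y => v τ y i) x) (Pi.single l 1)
          = ∫ τ in (0:ℝ)..t, jacM (v τ) x i l :=
    fun t ht x i => key_param (fun τ y => v τ y i) (fun τ hτ => hv_diff τ hτ i)
      (hv_comp_cont i) (fun l => hDv_cont i l) ht x
  -- splitting the flow map componentwise
  have hflow_eq : ∀ t ∈ Set.Icc (0:ℝ) T, ∀ i : Fin n,
      (fun y => lagFlow v t y i) = fun y => y i + ∫ τ in (0:ℝ)..t, v τ y i := by
    intro t ht i
    funext y
    have hint : IntervalIntegrable (fun τ => v τ y) MeasureTheory.volume 0 t := by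
      apply ContinuousOn.intervalIntegrable
      have : ContinuousOn ((fun p : ℝ × (Fin n → ℝ) => v p.1 p.2) ∘ fun τ => (τ, y))
          (Set.uIcc 0 t) := by
        apply hv_cont.comp (Continuous.continuousOn (continuous_id.prodMk continuous_const))
        intro τ hτ
        refine ⟨?_, trivial⟩
        rw [Set.uIcc_of_le ht.1] at hτ
        exact ⟨hτ.1, hτ.2.trans ht.2⟩
      exact this
    show (y + ∫ τ in (0:ℝ)..t, v τ y) i = _
    rw [Pi.add_apply]
    congr 1
    exact (ContinuousLinearMap.intervalIntegral_comp_comm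
      (ContinuousLinearMap.proj (R := ℝ) (φ := fun _ : Fin n => ℝ) i) hint).symm
  have hXder : ∀ t ∈ Set.Icc (0:ℝ) T, ∀ (x : Fin n → ℝ) (i : Fin n),
      HasFDerivAt (fun y => lagFlow v t y i)
        ((ContinuousLinearMap.proj (R := ℝ) (φ := fun _ : Fin n => ℝ) i)
          + ∫ τ in (0:ℝ)..t, fderiv ℝ (fun y => v τ y i) x) x := by
    intro t ht x i
    rw [hflow_eq t ht i]
    exact ((ContinuousLinearMap.proj (R := ℝ) (φ := fun _ : Fin n => ℝ) i).hasFDerivAt).add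
      (key1 t ht x i).1
  -- the entries of the Jacobian matrix of the flow
  have hAe : ∀ t ∈ Set.Icc (0:ℝ) T, ∀ (x : Fin n → ℝ) (i j : Fin n),
      jacM (lagFlow v t) x i j
        = (if i = j then 1 else 0) + ∫ τ in (0:ℝ)..t, jacM (v τ) x i j := by
    intro t ht x i j
    have h1 : jacM (lagFlow v t) x i j
        = fderiv ℝ (fun y => lagFlow v t y i) x (Pi.single j 1) := rfl
    rw [h1, (hXder t ht x i).fderiv, ContinuousLinearMap.add_apply,
      ContinuousLinearMap.proj_apply, (key1 t ht x i).2 j, Pi.single_apply]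
  -- time regularity of the matrix entries
  have hDvτ_contx : ∀ (x : Fin n → ℝ) (i j : Fin n),
      ContinuousOn (fun τ => jacM (v τ) x i j) (Set.Icc (0:ℝ) T) := by
    intro x i j
    have : ContinuousOn ((fun p : ℝ × (Fin n → ℝ) => jacM (v p.1) p.2 i j) ∘ fun τ => (τ, x))
        (Set.Icc (0:ℝ) T) := by
      apply (hDv_cont i j).comp (Continuous.continuousOn (continuous_id.prodMk continuous_const))
      intro τ hτ; exact ⟨hτ, trivial⟩
    exact this
  have hAt : ∀ t ∈ Set.Icc (0:ℝ) T, ∀ (x : Fin n → ℝ) (i j : Fin n),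
      HasDerivWithinAt
        (fun s => (if i = j then (1:ℝ) else 0) + ∫ τ in (0:ℝ)..s, jacM (v τ) x i j)
        (jacM (v t) x i j) (Set.Icc (0:ℝ) T) t := by
    intro t ht x i j
    haveI : Fact (t ∈ Set.Icc (0:ℝ) T) := ⟨ht⟩
    have huIcc : Set.uIcc (0:ℝ) t ⊆ Set.Icc (0:ℝ) T := by
      rw [Set.uIcc_of_le ht.1]; exact Set.Icc_subset_Icc le_rfl ht.2
    have hint : IntervalIntegrable (fun τ => jacM (v τ) x i j) MeasureTheory.volume 0 t :=
      ((hDvτ_contx x i j).mono huIcc).intervalIntegrable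
    have hmeas : StronglyMeasurableAtFilter (fun τ => jacM (v τ) x i j)
        (nhdsWithin t (Set.Icc (0:ℝ) T)) MeasureTheory.volume :=
      ContinuousOn.stronglyMeasurableAtFilter_nhdsWithin (hDvτ_contx x i j) measurableSet_Icc t
    exact HasDerivWithinAt.const_add _
      (intervalIntegral.integral_hasDerivWithinAt_right hint hmeas ((hDvτ_contx x i j) t ht))
  -- the derivative of the determinant in time
  have detpart : ∀ t ∈ Set.Icc (0:ℝ) T, ∀ x : Fin n → ℝ,
      HasDerivWithinAt (fun s => (jacM (lagFlow v s) x).det)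
        (∑ i, ∑ j, (jacM (lagFlow v t) x).adjugate i j * jacM (v t) x j i)
        (Set.Icc 0 T) t := by
    intro t ht x
    have hfun : ∀ s ∈ Set.Icc (0:ℝ) T, (jacM (lagFlow v s) x).det
        = ∑ σ : Equiv.Perm (Fin n), ((Equiv.Perm.sign σ : ℤ) : ℝ) *
            ∏ i, ((if σ i = i then (1:ℝ) else 0) + ∫ τ in (0:ℝ)..s, jacM (v τ) x (σ i) i) := by
      intro s hs
      rw [Matrix.det_apply']
      refine Finset.sum_congr rfl (fun σ _ => ?_)
      congr 1
      exact Finset.prod_congr rfl (fun k _ => hAe s hs x (σ k) k)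
    have hder : HasDerivWithinAt
        (fun s => ∑ σ : Equiv.Perm (Fin n), ((Equiv.Perm.sign σ : ℤ) : ℝ) *
            ∏ i, ((if σ i = i then (1:ℝ) else 0) + ∫ τ in (0:ℝ)..s, jacM (v τ) x (σ i) i))
        (∑ σ : Equiv.Perm (Fin n), ((Equiv.Perm.sign σ : ℤ) : ℝ) *
            ∑ i, (∏ k ∈ Finset.univ.erase i,
              ((if σ k = k then (1:ℝ) else 0) + ∫ τ in (0:ℝ)..t, jacM (v τ) x (σ k) k))
              • jacM (v t) x (σ i) i)
        (Set.Icc (0:ℝ) T) t := by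
      apply HasDerivWithinAt.fun_sum
      intro σ _
      exact (HasDerivWithinAt.fun_finset_prod (fun k _ => hAt t ht x (σ k) k)).const_mul _
    have hval : (∑ σ : Equiv.Perm (Fin n), ((Equiv.Perm.sign σ : ℤ) : ℝ) *
            ∑ i, (∏ k ∈ Finset.univ.erase i,
              ((if σ k = k then (1:ℝ) else 0) + ∫ τ in (0:ℝ)..t, jacM (v τ) x (σ k) k))
              • jacM (v t) x (σ i) i)
        = ∑ i, ∑ j, (jacM (lagFlow v t) x).adjugate i j * jacM (v t) x j i := by
      rw [← jacobi_trace (jacM (lagFlow v t) x) (jacM (v t) x)]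
      refine Finset.sum_congr rfl (fun σ _ => ?_)
      congr 1
      refine Finset.sum_congr rfl (fun i _ => ?_)
      rw [smul_eq_mul]
      congr 1
      exact Finset.prod_congr rfl (fun k _ => (hAe t ht x (σ k) k).symm)
    rw [hval] at hder
    exact hder.congr (fun s hs => hfun s hs) (hfun t ht)
  -- second-order entry derivatives
  have hjac_diff : ∀ τ ∈ Set.Icc (0:ℝ) T, ∀ (i j : Fin n),
      Differentiable ℝ (fun z => jacM (v τ) z i j) := by
    intro τ hτ i j
    have hg : ContDiff ℝ 2 (fun z => v τ z i) := contDiff_pi.mp (hv_x τ hτ) i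
    have h1 : ContDiff ℝ 1 (fderiv ℝ (fun z => v τ z i)) := hg.fderiv_right (by norm_num)
    exact ((h1.clm_apply contDiff_const).differentiable one_ne_zero)
  have key2 : ∀ t ∈ Set.Icc (0:ℝ) T, ∀ (x : Fin n → ℝ) (i j : Fin n),
      HasFDerivAt (fun y => jacM (lagFlow v t) y i j)
        (∫ τ in (0:ℝ)..t, fderiv ℝ (fun z => jacM (v τ) z i j) x) x ∧
      ∀ l, (∫ τ in (0:ℝ)..t, fderiv ℝ (fun z => jacM (v τ) z i j) x) (Pi.single l 1)
          = ∫ τ in (0:ℝ)..t, pd l (fun z => jacM (v τ) z i j) x := by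
    intro t ht x i j
    have key := key_param (fun τ z => jacM (v τ) z i j) (fun τ hτ => hjac_diff τ hτ i j)
      (hDv_cont i j) (fun l => hD2v_cont i j l) ht x
    refine ⟨?_, key.2⟩
    have hfe : (fun y => jacM (lagFlow v t) y i j)
        = fun y => (if i = j then (1:ℝ) else 0) + ∫ τ in (0:ℝ)..t, jacM (v τ) y i j := by
      funext y; exact hAe t ht y i j
    rw [hfe]
    exact key.1.const_add _
  -- symmetry of second derivatives
  have hsymm : ∀ τ ∈ Set.Icc (0:ℝ) T, ∀ (x : Fin n → ℝ) (i j l : Fin n),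
      pd l (fun z => jacM (v τ) z i j) x = pd j (fun z => jacM (v τ) z i l) x := by
    intro τ hτ x i j l
    have hg : ContDiff ℝ 2 (fun z => v τ z i) := contDiff_pi.mp (hv_x τ hτ) i
    have hd : Differentiable ℝ (fderiv ℝ (fun z => v τ z i)) :=
      (hg.fderiv_right (m := 1) (by norm_num)).differentiable one_ne_zero
    have hsec := second_derivative_symmetric (f := fun z => v τ z i)
      (f' := fderiv ℝ (fun z => v τ z i)) (f'' := fderiv ℝ (fderiv ℝ (fun z => v τ z i)) x)
      (fun y => ((hg.differentiable (by norm_num)) y).hasFDerivAt) (hd x).hasFDerivAt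
    have happ : ∀ u w : Fin n → ℝ,
        fderiv ℝ (fun z => fderiv ℝ (fun z' => v τ z' i) z u) x w
          = fderiv ℝ (fderiv ℝ (fun z' => v τ z' i)) x w u := by
      intro u w
      rw [fderiv_clm_apply (hd x) (differentiableAt_const u)]
      simp [ContinuousLinearMap.flip_apply]
    show fderiv ℝ (fun z => fderiv ℝ (fun z' => v τ z' i) z (Pi.single j 1)) x (Pi.single l 1)
      = fderiv ℝ (fun z => fderiv ℝ (fun z' => v τ z' i) z (Pi.single l 1)) x (Pi.single j 1)
    rw [happ, happ]
    exact hsec _ _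
  -- the divergence equals the trace expression
  have divpart : ∀ t ∈ Set.Icc (0:ℝ) T, ∀ x : Fin n → ℝ,
      (∑ i, pd i (fun y => ∑ j, (jacM (lagFlow v t) y).adjugate i j * v t y j) x)
        = ∑ i, ∑ j, (jacM (lagFlow v t) x).adjugate i j * jacM (v t) x j i := by
    intro t ht x
    set B : Fin n → Fin n → Fin n → ℝ :=
      fun r p q => ∫ τ in (0:ℝ)..t, pd r (fun z => jacM (v τ) z p q) x with hB
    have hBsym : ∀ r p q, B r p q = B q p r := by
      intro r p q
      apply intervalIntegral.integral_congr
      intro τ hτ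
      have hτ' : τ ∈ Set.Icc (0:ℝ) T := by
        rw [Set.uIcc_of_le ht.1] at hτ; exact ⟨hτ.1, hτ.2.trans ht.2⟩
      exact hsymm τ hτ' x p q r
    set D : Fin n → Fin n → ((Fin n → ℝ) →L[ℝ] ℝ) :=
      fun p q => ∫ τ in (0:ℝ)..t, fderiv ℝ (fun z => jacM (v τ) z p q) x with hD
    have hDapp : ∀ p q r, D p q (Pi.single r 1) = B r p q := fun p q r => (key2 t ht x p q).2 r
    set adjD : Fin n → Fin n → ((Fin n → ℝ) →L[ℝ] ℝ) := fun i j =>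
      ∑ σ ∈ Finset.univ.filter (fun σ : Equiv.Perm (Fin n) => σ i = j),
        ((Equiv.Perm.sign σ : ℤ) : ℝ) •
          ∑ l ∈ Finset.univ.erase i,
            (∏ k ∈ (Finset.univ.erase i).erase l, jacM (lagFlow v t) x (σ k) k) • D (σ l) l
      with hadjD
    have hadj_der : ∀ i j, HasFDerivAt (fun y => (jacM (lagFlow v t) y).adjugate i j)
        (adjD i j) x := by
      intro i j
      have hfe : (fun y => (jacM (lagFlow v t) y).adjugate i j)
          = fun y => ∑ σ ∈ Finset.univ.filter (fun σ : Equiv.Perm (Fin n) => σ i = j),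
              ((Equiv.Perm.sign σ : ℤ) : ℝ) *
                ∏ k ∈ Finset.univ.erase i, jacM (lagFlow v t) y (σ k) k := by
        funext y; exact adj_perm _ i j
      rw [hfe, hadjD]
      apply HasFDerivAt.fun_sum
      intro σ _
      exact (HasFDerivAt.finset_prod (fun k _ => (key2 t ht x (σ k) k).1)).const_mul _
    have hv_der : ∀ j, HasFDerivAt (fun y => v t y j) (fderiv ℝ (fun y => v t y j) x) x :=
      fun j => ((hv_diff t ht j) x).hasFDerivAt
    have hF_der : ∀ i, HasFDerivAt
        (fun y => ∑ j, (jacM (lagFlow v t) y).adjugate i j * v t y j)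
        (∑ j, ((jacM (lagFlow v t) x).adjugate i j • fderiv ℝ (fun y => v t y j) x
              + v t x j • adjD i j)) x := by
      intro i
      apply HasFDerivAt.fun_sum
      intro j _
      exact (hadj_der i j).mul (hv_der j)
    have hpd : ∀ i, pd i (fun y => ∑ j, (jacM (lagFlow v t) y).adjugate i j * v t y j) x
        = ∑ j, ((jacM (lagFlow v t) x).adjugate i j * jacM (v t) x j i
              + v t x j * (adjD i j (Pi.single i 1))) := by
      intro i
      unfold pd
      rw [(hF_der i).fderiv, ContinuousLinearMap.sum_apply]
      refine Finset.sum_congr rfl (fun j _ => ?_)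
      rw [ContinuousLinearMap.add_apply, ContinuousLinearMap.smul_apply,
        ContinuousLinearMap.smul_apply, smul_eq_mul, smul_eq_mul]
      rfl
    have hpiola : ∀ j, ∑ i, adjD i j (Pi.single i 1) = 0 := by
      intro j
      have hp := piola_alg j (jacM (lagFlow v t) x) B hBsym
      rw [← hp]
      refine Finset.sum_congr rfl (fun i _ => ?_)
      rw [hadjD, ContinuousLinearMap.sum_apply]
      refine Finset.sum_congr rfl (fun σ _ => ?_)
      rw [ContinuousLinearMap.smul_apply, smul_eq_mul]
      congr 1
      rw [ContinuousLinearMap.sum_apply]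
      refine Finset.sum_congr rfl (fun l _ => ?_)
      rw [ContinuousLinearMap.smul_apply, smul_eq_mul, hDapp]
    rw [Finset.sum_congr rfl (fun i (_ : i ∈ Finset.univ) => hpd i)]
    simp only [Finset.sum_add_distrib]
    have hzero : (∑ i, ∑ j, v t x j * adjD i j (Pi.single i 1)) = 0 := by
      rw [Finset.sum_comm]
      refine Finset.sum_eq_zero (fun j _ => ?_)
      rw [← Finset.mul_sum, hpiola j, mul_zero]
    rw [hzero, add_zero]
  -- conclusion
  constructor
  · intro t ht x
    rw [divpart t ht x]
    exact detpart t ht x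
  · intro H0 t ht x
    have hder0 : ∀ s ∈ Set.Icc (0:ℝ) T,
        HasDerivWithinAt (fun s' => (jacM (lagFlow v s') x).det) 0 (Set.Icc (0:ℝ) T) s := by
      intro s hs
      have h := detpart s hs x
      rw [← divpart s hs x, H0 s hs x] at h
      exact h
    have hcont : ContinuousOn (fun s' => (jacM (lagFlow v s') x).det) (Set.Icc (0:ℝ) T) :=
      fun s hs => (hder0 s hs).continuousWithinAt
    have hconst := constant_of_has_deriv_right_zero hcont (fun s hs => ?_) t ht
    · have h0 : jacM (lagFlow v 0) x = 1 := by
        ext i j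
        rw [hAe 0 ⟨le_rfl, hT.le⟩ x i j, intervalIntegral.integral_same, add_zero,
          Matrix.one_apply]
      rw [hconst, h0, Matrix.det_one]
    · have h1 := (hder0 s ⟨hs.1, hs.2.le⟩).mono (Set.Icc_subset_Icc hs.1 le_rfl)
      have h2 : Set.Icc s T =ᶠ[nhds s] Set.Ici s := by
        rw [Filter.eventuallyEq_set]
        filter_upwards [Iio_mem_nhds hs.2] with y hy
        simp only [Set.mem_Icc, Set.mem_Ici]
        exact and_iff_left hy.le
      exact (hasDerivWithinAt_congr_set h2).mp h1
end
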